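/- arXiv:math/0312337 — 3 statements merged into one kernel-verified Lean document; each statement's English description precedes it below -/
import Mathlib

section
/- Let H be a finite-dimensional Hopf algebra, λ a right integral for H* and Λ a left integral for H with λ(Λ) = λ(S(Λ)) = 1. For a ∈ H and f ∈ H*, the following are equivalent: (i) f(x) = λ(a x) for all x ∈ H; (ii) a = f(Λ₍₁₎) S(Λ₍₂₎). -/
/- STATEMENT 1: H a finite-dimensional Hopf algebra, λ a right integral for H*,
Λ a left integral for H with λ(Λ) = λ(S(Λ)) = 1.  For a ∈ H and f ∈ H*:
(i) f(x) = λ(ax) ∀x  ↔  (ii) a = f(Λ₍₁₎) S(Λ₍₂₎). -/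


open TensorProduct Coalgebra HopfAlgebra LinearMap

section Tools

variable {k H : Type*} [CommRing k] [Ring H] [HopfAlgebra k H]

local notation "ε" => Coalgebra.counit (R := k) (A := H)
local notation "Δ" => Coalgebra.comul (R := k) (A := H)
local notation "S" => HopfAlgebra.antipode (R := k) (A := H)

lemma my_antipode_one : S (1 : H) = 1 := by
  have := HopfAlgebra.mul_antipode_rTensor_comul_apply (R := k) (A := H) (1 : H)
  rw [Bialgebra.comul_one, Algebra.TensorProduct.one_def] at this
  simpa using this

lemma sum_counit_smul {ι : Type*} {a : H} (r : Coalgebra.Repr k a ι) :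
    ∑ i ∈ r.index, ε (r.left i) • r.right i = a := by
  have h := Coalgebra.sum_counit_tmul_eq (R := k) r
  have := congrArg (TensorProduct.lid k H) h
  simpa [map_sum, -Coalgebra.sum_counit_tmul_eq] using this

lemma sum_smul_counit {ι : Type*} {a : H} (r : Coalgebra.Repr k a ι) :
    ∑ i ∈ r.index, ε (r.right i) • r.left i = a := by
  have h := Coalgebra.sum_tmul_counit_eq (R := k) r
  have := congrArg (TensorProduct.rid k H) h
  simpa [map_sum, -Coalgebra.sum_tmul_counit_eq] using this

lemma sweedler_assoc {W : Type*} [AddCommMonoid W] [Module k W] {ι κ ν : Type*}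
    (ψ : H →ₗ[k] H →ₗ[k] H →ₗ[k] W) {a : H} (ra : Coalgebra.Repr k a ι)
    (ra1 : ∀ i, Coalgebra.Repr k (ra.left i) κ) (ra2 : ∀ i, Coalgebra.Repr k (ra.right i) ν) :
    ∑ i ∈ ra.index, ∑ l ∈ (ra1 i).index,
      ψ ((ra1 i).left l) ((ra1 i).right l) (ra.right i)
    = ∑ i ∈ ra.index, ∑ l ∈ (ra2 i).index,
      ψ (ra.left i) ((ra2 i).left l) ((ra2 i).right l) := by
  set μ : H ⊗[k] (H ⊗[k] H) →ₗ[k] W :=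
    TensorProduct.lift ((TensorProduct.lift.equiv (RingHom.id k) H H W).toLinearMap ∘ₗ ψ) with hμ
  have key := Coalgebra.sum_tmul_tmul_eq (R := k) ra ra1 ra2
  have := congrArg μ key
  simpa [hμ, map_sum, TensorProduct.lift.equiv] using this

lemma sum4_swap {β : Type*} [AddCommMonoid β] {ι κ : Type*} {γ : ι → Type*} {δ : κ → Type*}
    (sa : Finset ι) (sb : Finset κ) (ta : ∀ i, Finset (γ i)) (tb : ∀ j, Finset (δ j))
    (f : (i : ι) → γ i → (j : κ) → δ j → β) :
    ∑ i ∈ sa, ∑ l ∈ ta i, ∑ j ∈ sb, ∑ m ∈ tb j, f i l j m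
      = ∑ j ∈ sb, ∑ m ∈ tb j, ∑ i ∈ sa, ∑ l ∈ ta i, f i l j m :=
  calc ∑ i ∈ sa, ∑ l ∈ ta i, ∑ j ∈ sb, ∑ m ∈ tb j, f i l j m
      = ∑ i ∈ sa, ∑ j ∈ sb, ∑ l ∈ ta i, ∑ m ∈ tb j, f i l j m :=
        Finset.sum_congr rfl fun i _ => Finset.sum_comm
    _ = ∑ j ∈ sb, ∑ i ∈ sa, ∑ l ∈ ta i, ∑ m ∈ tb j, f i l j m := Finset.sum_comm
    _ = ∑ j ∈ sb, ∑ i ∈ sa, ∑ m ∈ tb j, ∑ l ∈ ta i, f i l j m :=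
        Finset.sum_congr rfl fun j _ => Finset.sum_congr rfl fun i _ => Finset.sum_comm
    _ = ∑ j ∈ sb, ∑ m ∈ tb j, ∑ i ∈ sa, ∑ l ∈ ta i, f i l j m :=
        Finset.sum_congr rfl fun j _ => Finset.sum_comm

/-- hand-made comultiplication on `H ⊗ H` (universe polymorphic) -/
noncomputable def d2 : H ⊗[k] H →ₗ[k] (H ⊗[k] H) ⊗[k] (H ⊗[k] H) :=
  (TensorProduct.tensorTensorTensorComm k H H H H).toLinearMap ∘ₗ TensorProduct.map Δ Δ

/-- convolution product on maps `H ⊗ H → H` -/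
noncomputable def conv2 (F G : H ⊗[k] H →ₗ[k] H) : H ⊗[k] H →ₗ[k] H :=
  LinearMap.mul' k H ∘ₗ TensorProduct.map F G ∘ₗ d2

/-- convolution unit -/
noncomputable def u2 : H ⊗[k] H →ₗ[k] H :=
  LinearMap.mul' k H ∘ₗ TensorProduct.map
    (Algebra.linearMap k H ∘ₗ Coalgebra.counit) (Algebra.linearMap k H ∘ₗ Coalgebra.counit)

lemma u2_tmul (a b : H) :
    u2 (k := k) (H := H) (a ⊗ₜ b) = algebraMap k H (ε a) * algebraMap k H (ε b) := by
  simp [u2]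

lemma d2_tmul {ι κ : Type*} (a b : H) {ra : Coalgebra.Repr k a ι} {rb : Coalgebra.Repr k b κ} :
    d2 (k := k) (H := H) (a ⊗ₜ b) = ∑ i ∈ ra.index, ∑ j ∈ rb.index,
      (ra.left i ⊗ₜ[k] rb.left j) ⊗ₜ[k] (ra.right i ⊗ₜ[k] rb.right j) := by
  simp only [d2, coe_comp, Function.comp_apply, TensorProduct.map_tmul, LinearEquiv.coe_coe]
  rw [← ra.eq, ← rb.eq, TensorProduct.sum_tmul]
  simp only [TensorProduct.tmul_sum, map_sum, tensorTensorTensorComm_tmul]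

lemma conv2_tmul {ι κ : Type*} (F G : H ⊗[k] H →ₗ[k] H) (a b : H)
    (ra : Coalgebra.Repr k a ι) (rb : Coalgebra.Repr k b κ) :
    conv2 F G (a ⊗ₜ b) = ∑ i ∈ ra.index, ∑ j ∈ rb.index,
      F (ra.left i ⊗ₜ rb.left j) * G (ra.right i ⊗ₜ rb.right j) := by
  have h := d2_tmul (k := k) a b (ra := ra) (rb := rb)
  simp [conv2, h, map_sum]

lemma conv2_u2_left (G : H ⊗[k] H →ₗ[k] H) : conv2 u2 G = G := by
  apply TensorProduct.ext'
  intro a b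
  have ra := Coalgebra.Repr.arbitrary k a
  have rb := Coalgebra.Repr.arbitrary k b
  rw [conv2_tmul u2 G a b ra rb]
  have key : G (a ⊗ₜ[k] b) = ∑ i ∈ ra.index, ∑ j ∈ rb.index,
      (ε (ra.left i) * ε (rb.left j)) • G (ra.right i ⊗ₜ rb.right j) := by
    conv_lhs => rw [← sum_counit_smul (k := k) ra, ← sum_counit_smul (k := k) rb]
    simp only [TensorProduct.sum_tmul, TensorProduct.tmul_sum, map_sum,
      ← TensorProduct.smul_tmul', TensorProduct.tmul_smul, map_smul, Finset.smul_sum, smul_smul]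
    rw [Finset.sum_comm]
    exact Finset.sum_congr rfl fun i _ => Finset.sum_congr rfl fun j _ => by rw [mul_comm]
  rw [key]
  refine Finset.sum_congr rfl fun i _ => Finset.sum_congr rfl fun j _ => ?_
  rw [u2_tmul, ← map_mul, ← Algebra.smul_def]

lemma conv2_u2_right (F : H ⊗[k] H →ₗ[k] H) : conv2 F u2 = F := by
  apply TensorProduct.ext'
  intro a b
  have ra := Coalgebra.Repr.arbitrary k a
  have rb := Coalgebra.Repr.arbitrary k b
  rw [conv2_tmul F u2 a b ra rb]
  have key : F (a ⊗ₜ[k] b) = ∑ i ∈ ra.index, ∑ j ∈ rb.index,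
      (ε (ra.right i) * ε (rb.right j)) • F (ra.left i ⊗ₜ rb.left j) := by
    conv_lhs => rw [← sum_smul_counit (k := k) ra, ← sum_smul_counit (k := k) rb]
    simp only [TensorProduct.sum_tmul, TensorProduct.tmul_sum, map_sum,
      ← TensorProduct.smul_tmul', TensorProduct.tmul_smul, map_smul, Finset.smul_sum, smul_smul]
    rw [Finset.sum_comm]
    exact Finset.sum_congr rfl fun i _ => Finset.sum_congr rfl fun j _ => by rw [mul_comm]
  rw [key]
  refine Finset.sum_congr rfl fun i _ => Finset.sum_congr rfl fun j _ => ?_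
  rw [u2_tmul, ← map_mul, Algebra.smul_def, Algebra.commutes]

/-- the trilinear map `(x, y, z) ↦ (A x * B y) * C z` -/
noncomputable def tri3m (A B C : H →ₗ[k] H) : H →ₗ[k] H →ₗ[k] H →ₗ[k] H where
  toFun x := (LinearMap.mul k H).compl₁₂ ((LinearMap.mulLeft k (A x)).comp B) C
  map_add' x y := by ext u v; simp [add_mul]
  map_smul' c x := by ext u v; simp [smul_mul_assoc]

lemma tri3m_apply (A B C : H →ₗ[k] H) (x y z : H) :
    tri3m A B C x y z = (A x * B y) * C z := rfl

/-- `x ↦ x ⊗ₜ c` -/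
noncomputable def insL (c : H) : H →ₗ[k] H ⊗[k] H := (TensorProduct.mk k H H).flip c

/-- `x ↦ c ⊗ₜ x` -/
noncomputable def insR (c : H) : H →ₗ[k] H ⊗[k] H := TensorProduct.mk k H H c

@[simp] lemma insL_apply (c x : H) : insL (k := k) c x = x ⊗ₜ c := rfl
@[simp] lemma insR_apply (c x : H) : insR (k := k) c x = c ⊗ₜ x := rfl

end Tools
section ConvAssoc

variable {k H : Type*} [CommRing k] [Ring H] [HopfAlgebra k H]

local notation "ε" => Coalgebra.counit (R := k) (A := H)
local notation "Δ" => Coalgebra.comul (R := k) (A := H)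
local notation "S" => HopfAlgebra.antipode (R := k) (A := H)

lemma conv2_assoc (F G Hh : H ⊗[k] H →ₗ[k] H) :
    conv2 (conv2 F G) Hh = conv2 F (conv2 G Hh) := by
  apply TensorProduct.ext'
  intro a b
  have ra := Coalgebra.Repr.arbitrary k a
  have rb := Coalgebra.Repr.arbitrary k b
  have ra1 : ∀ i, Coalgebra.Repr k (ra.left i) (H × H) := fun i => Coalgebra.Repr.arbitrary k _
  have ra2 : ∀ i, Coalgebra.Repr k (ra.right i) (H × H) := fun i => Coalgebra.Repr.arbitrary k _
  have rb1 : ∀ j, Coalgebra.Repr k (rb.left j) (H × H) := fun j => Coalgebra.Repr.arbitrary k _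
  have rb2 : ∀ j, Coalgebra.Repr k (rb.right j) (H × H) := fun j => Coalgebra.Repr.arbitrary k _
  -- step 1 : expand the left-hand side, with nested reprs on the left legs
  have e1 : conv2 (conv2 F G) Hh (a ⊗ₜ[k] b)
      = ∑ i ∈ ra.index, ∑ l ∈ (ra1 i).index, ∑ j ∈ rb.index, ∑ m ∈ (rb1 j).index,
          (F ((ra1 i).left l ⊗ₜ (rb1 j).left m) * G ((ra1 i).right l ⊗ₜ (rb1 j).right m))
            * Hh (ra.right i ⊗ₜ rb.right j) := by
    rw [conv2_tmul _ Hh a b ra rb]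
    refine Finset.sum_congr rfl fun i _ => ?_
    calc ∑ j ∈ rb.index, conv2 F G (ra.left i ⊗ₜ rb.left j) * Hh (ra.right i ⊗ₜ rb.right j)
        = ∑ j ∈ rb.index, ∑ l ∈ (ra1 i).index, ∑ m ∈ (rb1 j).index,
            (F ((ra1 i).left l ⊗ₜ (rb1 j).left m) * G ((ra1 i).right l ⊗ₜ (rb1 j).right m))
              * Hh (ra.right i ⊗ₜ rb.right j) := by
          refine Finset.sum_congr rfl fun j _ => ?_
          rw [conv2_tmul F G _ _ (ra1 i) (rb1 j), Finset.sum_mul]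
          exact Finset.sum_congr rfl fun l _ => by rw [Finset.sum_mul]
      _ = _ := Finset.sum_comm
  -- step 2 : move the nested repr from the left legs of `a` to the right legs of `a`
  have e2 : ∑ i ∈ ra.index, ∑ l ∈ (ra1 i).index, ∑ j ∈ rb.index, ∑ m ∈ (rb1 j).index,
          (F ((ra1 i).left l ⊗ₜ (rb1 j).left m) * G ((ra1 i).right l ⊗ₜ (rb1 j).right m))
            * Hh (ra.right i ⊗ₜ rb.right j)
      = ∑ i ∈ ra.index, ∑ l ∈ (ra2 i).index, ∑ j ∈ rb.index, ∑ m ∈ (rb1 j).index,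
          (F (ra.left i ⊗ₜ (rb1 j).left m) * G ((ra2 i).left l ⊗ₜ (rb1 j).right m))
            * Hh ((ra2 i).right l ⊗ₜ rb.right j) := by
    have := sweedler_assoc (k := k)
      (∑ j ∈ rb.index, ∑ m ∈ (rb1 j).index,
        tri3m (F ∘ₗ insL ((rb1 j).left m)) (G ∘ₗ insL ((rb1 j).right m))
          (Hh ∘ₗ insL (rb.right j))) ra ra1 ra2
    simpa only [LinearMap.sum_apply, tri3m_apply, coe_comp, Function.comp_apply,
      insL_apply] using this
  -- step 3 : move the nested repr from the left legs of `b` to the right legs of `b`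
  have e3 : ∑ j ∈ rb.index, ∑ m ∈ (rb1 j).index, ∑ i ∈ ra.index, ∑ l ∈ (ra2 i).index,
          (F (ra.left i ⊗ₜ (rb1 j).left m) * G ((ra2 i).left l ⊗ₜ (rb1 j).right m))
            * Hh ((ra2 i).right l ⊗ₜ rb.right j)
      = ∑ j ∈ rb.index, ∑ m ∈ (rb2 j).index, ∑ i ∈ ra.index, ∑ l ∈ (ra2 i).index,
          (F (ra.left i ⊗ₜ rb.left j) * G ((ra2 i).left l ⊗ₜ (rb2 j).left m))
            * Hh ((ra2 i).right l ⊗ₜ (rb2 j).right m) := by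
    have := sweedler_assoc (k := k)
      (∑ i ∈ ra.index, ∑ l ∈ (ra2 i).index,
        tri3m (F ∘ₗ insR (ra.left i)) (G ∘ₗ insR ((ra2 i).left l))
          (Hh ∘ₗ insR ((ra2 i).right l))) rb rb1 rb2
    simpa only [LinearMap.sum_apply, tri3m_apply, coe_comp, Function.comp_apply,
      insR_apply] using this
  -- step 4 : expand the right-hand side
  have e4 : conv2 F (conv2 G Hh) (a ⊗ₜ[k] b)
      = ∑ i ∈ ra.index, ∑ l ∈ (ra2 i).index, ∑ j ∈ rb.index, ∑ m ∈ (rb2 j).index,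
          (F (ra.left i ⊗ₜ rb.left j) * G ((ra2 i).left l ⊗ₜ (rb2 j).left m))
            * Hh ((ra2 i).right l ⊗ₜ (rb2 j).right m) := by
    rw [conv2_tmul F _ a b ra rb]
    refine Finset.sum_congr rfl fun i _ => ?_
    calc ∑ j ∈ rb.index, F (ra.left i ⊗ₜ rb.left j) * conv2 G Hh (ra.right i ⊗ₜ rb.right j)
        = ∑ j ∈ rb.index, ∑ l ∈ (ra2 i).index, ∑ m ∈ (rb2 j).index,
            (F (ra.left i ⊗ₜ rb.left j) * G ((ra2 i).left l ⊗ₜ (rb2 j).left m))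
              * Hh ((ra2 i).right l ⊗ₜ (rb2 j).right m) := by
          refine Finset.sum_congr rfl fun j _ => ?_
          rw [conv2_tmul G Hh _ _ (ra2 i) (rb2 j), Finset.mul_sum]
          refine Finset.sum_congr rfl fun l _ => ?_
          rw [Finset.mul_sum]
          exact Finset.sum_congr rfl fun m _ => by rw [mul_assoc]
      _ = _ := Finset.sum_comm
  rw [e1, e2, e4,
    sum4_swap ra.index rb.index (fun i => (ra2 i).index) (fun j => (rb1 j).index), e3,
    sum4_swap rb.index ra.index (fun j => (rb2 j).index) (fun i => (ra2 i).index)]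

end ConvAssoc
section Antihom

variable {k H : Type*} [CommRing k] [Ring H] [HopfAlgebra k H]

local notation "ε" => Coalgebra.counit (R := k) (A := H)
local notation "Δ" => Coalgebra.comul (R := k) (A := H)
local notation "S" => HopfAlgebra.antipode (R := k) (A := H)

lemma conv2_Sm_m : conv2 ((S : H →ₗ[k] H) ∘ₗ LinearMap.mul' k H) (LinearMap.mul' k H) = u2 := by
  apply TensorProduct.ext'
  intro a b
  have ra := Coalgebra.Repr.arbitrary k a
  have rb := Coalgebra.Repr.arbitrary k b
  have hab : Δ (a * b) = ∑ i ∈ ra.index, ∑ j ∈ rb.index,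
      (ra.left i * rb.left j) ⊗ₜ[k] (ra.right i * rb.right j) := by
    rw [Bialgebra.comul_mul, ← ra.eq, ← rb.eq, Finset.sum_mul_sum]
    simp [Algebra.TensorProduct.tmul_mul_tmul]
  rw [conv2_tmul _ _ a b ra rb, u2_tmul, ← map_mul, ← Bialgebra.counit_mul,
    ← HopfAlgebra.mul_antipode_rTensor_comul_apply (R := k), hab]
  simp [map_sum]

lemma conv2_m_SSc :
    conv2 (LinearMap.mul' k H)
      ((LinearMap.mul' k H) ∘ₗ TensorProduct.map S S ∘ₗ (TensorProduct.comm k H H).toLinearMap)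
      = u2 := by
  apply TensorProduct.ext'
  intro a b
  have ra := Coalgebra.Repr.arbitrary k a
  have rb := Coalgebra.Repr.arbitrary k b
  rw [conv2_tmul _ _ a b ra rb, u2_tmul]
  have step : ∀ i ∈ ra.index,
      ∑ j ∈ rb.index, (ra.left i * rb.left j) *
        ((LinearMap.mul' k H ∘ₗ TensorProduct.map S S ∘ₗ (TensorProduct.comm k H H).toLinearMap)
          (ra.right i ⊗ₜ rb.right j))
      = ra.left i * S (ra.right i) * algebraMap k H (ε b) := by
    intro i _
    have : ∀ j, (ra.left i * rb.left j) *
        ((LinearMap.mul' k H ∘ₗ TensorProduct.map S S ∘ₗ (TensorProduct.comm k H H).toLinearMap)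
          (ra.right i ⊗ₜ rb.right j))
        = ra.left i * ((rb.left j * S (rb.right j)) * S (ra.right i)) := by
      intro j
      simp only [coe_comp, Function.comp_apply, LinearEquiv.coe_coe, TensorProduct.comm_tmul,
        TensorProduct.map_tmul, LinearMap.mul'_apply]
      rw [mul_assoc, mul_assoc]
    rw [Finset.sum_congr rfl fun j _ => this j, ← Finset.mul_sum, ← Finset.sum_mul,
      HopfAlgebra.sum_mul_antipode_eq_algebraMap_counit (R := k) rb, Algebra.commutes, ← mul_assoc]
  simp only [LinearMap.mul'_apply]
  rw [Finset.sum_congr rfl step, ← Finset.sum_mul]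
  have : ∑ i ∈ ra.index, ra.left i * S (ra.right i) = algebraMap k H (ε a) :=
    HopfAlgebra.sum_mul_antipode_eq_algebraMap_counit (R := k) ra
  rw [this]

lemma antipode_mul_rev (a b : H) : S (a * b) = S b * S a := by
  have key : (S : H →ₗ[k] H) ∘ₗ LinearMap.mul' k H
      = (LinearMap.mul' k H) ∘ₗ TensorProduct.map S S ∘ₗ (TensorProduct.comm k H H).toLinearMap :=
    calc (S : H →ₗ[k] H) ∘ₗ LinearMap.mul' k H
        = conv2 ((S : H →ₗ[k] H) ∘ₗ LinearMap.mul' k H) u2 := (conv2_u2_right _).symm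
      _ = conv2 ((S : H →ₗ[k] H) ∘ₗ LinearMap.mul' k H)
            (conv2 (LinearMap.mul' k H) ((LinearMap.mul' k H) ∘ₗ TensorProduct.map S S ∘ₗ
              (TensorProduct.comm k H H).toLinearMap)) := by rw [conv2_m_SSc]
      _ = conv2 (conv2 ((S : H →ₗ[k] H) ∘ₗ LinearMap.mul' k H) (LinearMap.mul' k H))
            ((LinearMap.mul' k H) ∘ₗ TensorProduct.map S S ∘ₗ
              (TensorProduct.comm k H H).toLinearMap) := (conv2_assoc _ _ _).symm
      _ = conv2 u2 ((LinearMap.mul' k H) ∘ₗ TensorProduct.map S S ∘ₗ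
              (TensorProduct.comm k H H).toLinearMap) := by rw [conv2_Sm_m]
      _ = _ := conv2_u2_left _
  have := congrArg (fun Fm : H ⊗[k] H →ₗ[k] H => Fm (a ⊗ₜ[k] b)) key
  simpa using this

end Antihom
universe w

section MainTools

variable {k H : Type*} [CommRing k] [Ring H] [HopfAlgebra k H]

local notation "ε" => Coalgebra.counit (R := k) (A := H)
local notation "Δ" => Coalgebra.comul (R := k) (A := H)
local notation "S" => HopfAlgebra.antipode (R := k) (A := H)

/-- reindex a representation through `ULift (Fin n)`, to land in any desired universe -/
noncomputable def reprFin {ι : Type*} {x : H} (r : Coalgebra.Repr k x ι) :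
    Coalgebra.Repr k x (ULift.{w} (Fin r.index.card)) where
  index := Finset.univ
  left i := r.left (r.index.equivFin.symm i.down).1
  right i := r.right (r.index.equivFin.symm i.down).1
  eq := by
    rw [← r.eq]
    calc ∑ i : ULift (Fin r.index.card),
          r.left (r.index.equivFin.symm i.down).1 ⊗ₜ[k] r.right (r.index.equivFin.symm i.down).1
        = ∑ i : Fin r.index.card,
          r.left (r.index.equivFin.symm i).1 ⊗ₜ[k] r.right (r.index.equivFin.symm i).1 :=
          Equiv.sum_comp Equiv.ulift
            (fun i => r.left (r.index.equivFin.symm i).1 ⊗ₜ[k] r.right (r.index.equivFin.symm i).1)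
      _ = ∑ i : {y // y ∈ r.index}, r.left i.1 ⊗ₜ[k] r.right i.1 :=
          Equiv.sum_comp r.index.equivFin.symm (fun i => r.left i.1 ⊗ₜ[k] r.right i.1)
      _ = ∑ i ∈ r.index, r.left i ⊗ₜ[k] r.right i :=
          Finset.sum_coe_sort r.index (fun i => r.left i ⊗ₜ[k] r.right i)

/-- the trilinear map `(x, y, z) ↦ A x • (B y * z)` -/
noncomputable def triSm (A : H →ₗ[k] k) (B : H →ₗ[k] H) : H →ₗ[k] H →ₗ[k] H →ₗ[k] H where
  toFun x := A x • ((LinearMap.mul k H).compl₁₂ B LinearMap.id)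
  map_add' x y := by simp [add_smul]
  map_smul' c x := by simp [mul_smul]

lemma triSm_apply (A : H →ₗ[k] k) (B : H →ₗ[k] H) (x y z : H) :
    triSm A B x y z = A x • (B y * z) := rfl

/-- `u ⊗ v ↦ f u • v` -/
noncomputable def Mmap (f : H →ₗ[k] k) : H ⊗[k] H →ₗ[k] H :=
  TensorProduct.lift ((LinearMap.lsmul k H) ∘ₗ f)

@[simp] lemma Mmap_tmul (f : H →ₗ[k] k) (u v : H) : Mmap f (u ⊗ₜ v) = f u • v := by
  simp [Mmap]

/-- `u ⊗ v ↦ f u • S v` -/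
noncomputable def Nmap (f : H →ₗ[k] k) : H ⊗[k] H →ₗ[k] H :=
  (S : H →ₗ[k] H) ∘ₗ Mmap f

@[simp] lemma Nmap_tmul (f : H →ₗ[k] k) (u v : H) : Nmap f (u ⊗ₜ v) = f u • S v := by
  simp [Nmap]

variable (lam : H →ₗ[k] k) {Λ : H}

lemma Nmap_comul_mul
    (hlam' : ∀ y : H, Mmap lam (Δ y) = lam y • 1)
    (hΛ : ∀ x : H, x * Λ = ε x • Λ) (hpair : lam Λ = 1) (y : H) :
    Nmap lam (Δ y * Δ Λ) = ε y • 1 := by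
  have h1 : Nmap lam (Δ Λ) = 1 := by
    rw [Nmap, coe_comp, Function.comp_apply, hlam' Λ, hpair, one_smul, my_antipode_one]
  rw [← Bialgebra.comul_mul, hΛ y, map_smul, map_smul, h1]

end MainTools
section Kmain

variable {k H : Type*} [CommRing k] [Ring H] [HopfAlgebra k H]

local notation "ε" => Coalgebra.counit (R := k) (A := H)
local notation "Δ" => Coalgebra.comul (R := k) (A := H)
local notation "S" => HopfAlgebra.antipode (R := k) (A := H)

lemma Kmain (lam : H →ₗ[k] k) {Λ : H}
    (hlam' : ∀ y : H, Mmap lam (Δ y) = lam y • 1)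
    (hΛ : ∀ x : H, x * Λ = ε x • Λ) (hpair : lam Λ = 1)
    {ι : Type*} (r₀ : Coalgebra.Repr k Λ ι) (a : H) :
    ∑ j ∈ r₀.index, lam (a * r₀.left j) • S (r₀.right j) = a := by
  set KL : H →ₗ[k] H :=
    ∑ j ∈ r₀.index, (lam ∘ₗ LinearMap.mulRight k (r₀.left j)).smulRight (S (r₀.right j))
    with hKLdef
  have hKL : ∀ u, KL u = ∑ j ∈ r₀.index, lam (u * r₀.left j) • S (r₀.right j) := by
    intro u; simp [hKLdef, LinearMap.sum_apply]
  have ra := Coalgebra.Repr.arbitrary k a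
  have ra1 : ∀ i, Coalgebra.Repr k (ra.left i) (H × H) := fun i => Coalgebra.Repr.arbitrary k _
  have ra2 : ∀ i, Coalgebra.Repr k (ra.right i) (H × H) := fun i => Coalgebra.Repr.arbitrary k _
  set ψ : H →ₗ[k] H →ₗ[k] H →ₗ[k] H :=
    ∑ j ∈ r₀.index, triSm (lam ∘ₗ LinearMap.mulRight k (r₀.left j))
      ((S : H →ₗ[k] H) ∘ₗ LinearMap.mulRight k (r₀.right j)) with hψdef
  have hψ : ∀ u v w, ψ u v w
      = ∑ j ∈ r₀.index, lam (u * r₀.left j) • (S (v * r₀.right j) * w) := by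
    intro u v w; simp [hψdef, LinearMap.sum_apply, triSm_apply]
  have fact1 : ∀ u x, KL u * S x
      = ∑ j ∈ r₀.index, lam (u * r₀.left j) • S (x * r₀.right j) := by
    intro u x
    rw [hKL, Finset.sum_mul]
    exact Finset.sum_congr rfl fun j _ => by rw [smul_mul_assoc, ← antipode_mul_rev]
  have fact3 : ∀ (y : H) (r : Coalgebra.Repr k y (H × H)),
      ∑ l ∈ r.index, ∑ j ∈ r₀.index,
        lam (r.left l * r₀.left j) • S (r.right l * r₀.right j) = ε y • 1 := by
    intro y r
    have expand : Δ y * Δ Λ = ∑ l ∈ r.index, ∑ j ∈ r₀.index,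
        (r.left l * r₀.left j) ⊗ₜ[k] (r.right l * r₀.right j) := by
      rw [← r.eq, ← r₀.eq, Finset.sum_mul_sum]
      simp [Algebra.TensorProduct.tmul_mul_tmul]
    have hN := Nmap_comul_mul lam hlam' hΛ hpair y
    rw [expand] at hN
    simpa [map_sum] using hN
  calc ∑ j ∈ r₀.index, lam (a * r₀.left j) • S (r₀.right j) = KL a := (hKL a).symm
    _ = KL (∑ i ∈ ra.index, ε (ra.right i) • ra.left i) := by rw [sum_smul_counit ra]
    _ = ∑ i ∈ ra.index, ε (ra.right i) • KL (ra.left i) := by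
        rw [map_sum]; exact Finset.sum_congr rfl fun i _ => map_smul _ _ _
    _ = ∑ i ∈ ra.index, ∑ l ∈ (ra2 i).index,
          (KL (ra.left i) * S ((ra2 i).left l)) * (ra2 i).right l := by
        refine Finset.sum_congr rfl fun i _ => ?_
        have h1 : ε (ra.right i) • KL (ra.left i)
            = KL (ra.left i) * (ε (ra.right i) • (1 : H)) := by
          rw [mul_smul_comm, mul_one]
        rw [h1, ← HopfAlgebra.sum_antipode_mul_eq_smul (R := k) (ra2 i), Finset.mul_sum]
        exact Finset.sum_congr rfl fun l _ => (mul_assoc _ _ _).symm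
    _ = ∑ i ∈ ra.index, ∑ l ∈ (ra2 i).index,
          ψ (ra.left i) ((ra2 i).left l) ((ra2 i).right l) := by
        refine Finset.sum_congr rfl fun i _ => Finset.sum_congr rfl fun l _ => ?_
        rw [fact1, hψ, Finset.sum_mul]
        exact Finset.sum_congr rfl fun j _ => smul_mul_assoc _ _ _
    _ = ∑ i ∈ ra.index, ∑ l ∈ (ra1 i).index,
          ψ ((ra1 i).left l) ((ra1 i).right l) (ra.right i) :=
        (sweedler_assoc (k := k) ψ ra ra1 ra2).symm
    _ = ∑ i ∈ ra.index, (ε (ra.left i) • (1 : H)) * ra.right i := by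
        refine Finset.sum_congr rfl fun i _ => ?_
        rw [← fact3 (ra.left i) (ra1 i), Finset.sum_mul]
        refine Finset.sum_congr rfl fun l _ => ?_
        rw [hψ, Finset.sum_mul]
        exact Finset.sum_congr rfl fun j _ => (smul_mul_assoc _ _ _).symm
    _ = ∑ i ∈ ra.index, ε (ra.left i) • ra.right i :=
        Finset.sum_congr rfl fun i _ => by rw [smul_mul_assoc, one_mul]
    _ = a := _root_.sum_counit_smul ra

end Kmain
section PhiPsi

variable {k H : Type*} [CommRing k] [Ring H] [HopfAlgebra k H]

local notation "S" => HopfAlgebra.antipode (R := k) (A := H)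

lemma sum_repr_N {ι : Type*} (f : H →ₗ[k] k) {x : H} (r : Coalgebra.Repr k x ι) :
    ∑ i ∈ r.index, f (r.left i) • S (r.right i) = Nmap f (Coalgebra.comul x) := by
  rw [← r.eq, map_sum]; simp

/-- `a ↦ λ(a ·)` -/
noncomputable def phiMap (lam : H →ₗ[k] k) : H →ₗ[k] (H →ₗ[k] k) where
  toFun a := lam ∘ₗ LinearMap.mulLeft k a
  map_add' a b := by ext x; simp [add_mul]
  map_smul' c a := by ext x; simp [smul_mul_assoc]

@[simp] lemma phiMap_apply (lam : H →ₗ[k] k) (a x : H) : phiMap lam a x = lam (a * x) := rfl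

/-- `f ↦ ∑ f(Λ₍₁₎) S(Λ₍₂₎)` -/
noncomputable def psiMap {ι : Type*} {Λ : H} (r₀ : Coalgebra.Repr k Λ ι) : (H →ₗ[k] k) →ₗ[k] H where
  toFun f := ∑ j ∈ r₀.index, f (r₀.left j) • S (r₀.right j)
  map_add' f g := by simp [add_smul, Finset.sum_add_distrib]
  map_smul' c f := by simp [Finset.smul_sum, smul_smul]

@[simp] lemma psiMap_apply {ι : Type*} {Λ : H} (r₀ : Coalgebra.Repr k Λ ι) (f : H →ₗ[k] k) :
    psiMap r₀ f = ∑ j ∈ r₀.index, f (r₀.left j) • S (r₀.right j) := rfl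

end PhiPsi

open TensorProduct Coalgebra HopfAlgebra

theorem stmt1 {k H : Type*} [Field k] [Ring H] [HopfAlgebra k H] [FiniteDimensional k H]
    (lam : H →ₗ[k] k) (Λ : H)
    (hlam : ∀ (x : H) {ι : Type _} (r : Coalgebra.Repr k x ι),
      ∑ i ∈ r.index, lam (r.left i) • r.right i = lam x • (1 : H))
    (hΛ : ∀ x : H, x * Λ = Coalgebra.counit (R := k) x • Λ)
    (hpair : lam Λ = 1) (hpair' : lam (HopfAlgebra.antipode (R := k) Λ) = 1)
    (a : H) (f : H →ₗ[k] k) :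
    (∀ x : H, f x = lam (a * x)) ↔
      (∀ {ι : Type _} (r : Coalgebra.Repr k Λ ι),
        a = ∑ i ∈ r.index, f (r.left i) • HopfAlgebra.antipode (R := k) (r.right i)) := by
  have hlam' : ∀ y : H, Mmap lam (Coalgebra.comul y) = lam y • 1 := by
    intro y
    have r := reprFin (k := k) (Coalgebra.Repr.arbitrary k y)
    have h := hlam y r
    rw [← r.eq, map_sum]
    simpa using h
  have r₀ := Coalgebra.Repr.arbitrary k Λ
  have hψφ : ∀ b : H, psiMap r₀ (phiMap lam b) = b := by
    intro b
    have := Kmain lam hlam' hΛ hpair r₀ b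
    simpa using this
  have hinj : Function.Injective (phiMap (k := k) lam) := fun x y hxy => by
    rw [← hψφ x, ← hψφ y, hxy]
  have hdim : Module.finrank k H = Module.finrank k (H →ₗ[k] k) :=
    (Subspace.dual_finrank_eq (K := k) (V := H)).symm
  have hsurj : Function.Surjective (phiMap (k := k) lam) :=
    (LinearMap.injective_iff_surjective_of_finrank_eq_finrank hdim).mp hinj
  have hφψ : ∀ g : H →ₗ[k] k, phiMap lam (psiMap r₀ g) = g := by
    intro g
    obtain ⟨b, rfl⟩ := hsurj g
    rw [hψφ]
  constructor
  · intro h _ r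
    have hf : f = phiMap lam a := by ext x; rw [h x]; simp
    have e1 : ∑ i ∈ r.index, f (r.left i) • HopfAlgebra.antipode (R := k) (r.right i)
        = Nmap f (Coalgebra.comul Λ) := sum_repr_N f r
    have e2 : psiMap r₀ f = Nmap f (Coalgebra.comul Λ) := sum_repr_N f r₀
    rw [e1, ← e2, hf, hψφ]
  · intro h x
    have ha : a = psiMap r₀ f := by
      have hr := h (reprFin (Coalgebra.Repr.arbitrary k Λ))
      rw [psiMap_apply, sum_repr_N f r₀]
      exact hr.trans (sum_repr_N f _)
    have hfa : phiMap lam a = f := by rw [ha, hφψ]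
    rw [← hfa]; simp
end

section
/- With H, λ, Λ, ν as above, the element S(Λ) is a two-sided unit for the product x * z = λ(x S(z₍₂₎)) z₍₁₎ on L(H): for all z ∈ L(H), z * S(Λ) = z = S(Λ) * z. -/
/- STATEMENT 4: With H, λ, Λ, ν as above, S(Λ) is a two-sided unit for the product
x ⋆ z = λ(x S(z₍₂₎)) z₍₁₎ on L(H): for all z ∈ L(H), z ⋆ S(Λ) = z = S(Λ) ⋆ z. -/

open TensorProduct Coalgebra HopfAlgebra

/-- The right action `x ↼ ν = ν(x₍₁₎) x₍₂₎`. -/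
noncomputable def actnu {k H : Type*} [Field k] [Ring H] [HopfAlgebra k H]
    (ν : H →ₐ[k] k) : H →ₗ[k] H :=
  (TensorProduct.lid k H).toLinearMap ∘ₗ (TensorProduct.map ν.toLinearMap LinearMap.id)
    ∘ₗ (Coalgebra.comul : H →ₗ[k] H ⊗[k] H)

/-- The product `x ⋆ z = λ(x S(z₍₂₎)) z₍₁₎` on `L(H)`. -/
noncomputable def hstar {k H : Type*} [Field k] [Ring H] [HopfAlgebra k H]
    (lam : H →ₗ[k] k) (x z : H) : H :=
  (TensorProduct.rid k H)
    ((TensorProduct.map LinearMap.id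
        (lam ∘ₗ LinearMap.mulLeft k x ∘ₗ HopfAlgebra.antipode (R := k)))
      (Coalgebra.comul (R := k) z))


section Hopf
variable {k H : Type*} [Field k] [Ring H] [HopfAlgebra k H]

local notation "𝒮" => HopfAlgebra.antipode (R := k)
local notation "ε" => Coalgebra.counit (R := k)
local notation "Δ" => Coalgebra.comul (R := k)

lemma aux_counit_left {ι : Type*} {a : H} (r : Repr k a ι) :
    ∑ i ∈ r.index, ε (r.left i) • r.right i = a := by
  calc ∑ i ∈ r.index, ε (r.left i) • r.right i
      = (TensorProduct.lid k H) (LinearMap.rTensor H (ε : H →ₗ[k] k)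
          (∑ i ∈ r.index, r.left i ⊗ₜ[k] r.right i)) := by
        rw [map_sum, map_sum]
        simp only [LinearMap.rTensor_tmul, TensorProduct.lid_tmul]
    _ = a := by rw [r.eq, Coalgebra.rTensor_counit_comul]; simp

lemma aux_counit_right {ι : Type*} {a : H} (r : Repr k a ι) :
    ∑ i ∈ r.index, ε (r.right i) • r.left i = a := by
  calc ∑ i ∈ r.index, ε (r.right i) • r.left i
      = (TensorProduct.rid k H) (LinearMap.lTensor H (ε : H →ₗ[k] k)
          (∑ i ∈ r.index, r.left i ⊗ₜ[k] r.right i)) := by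
        rw [map_sum, map_sum]
        simp only [LinearMap.lTensor_tmul, TensorProduct.rid_tmul]
    _ = a := by rw [r.eq, Coalgebra.lTensor_counit_comul]; simp

lemma coassoc_switch {W : Type*} [AddCommMonoid W] [Module k W]
    (L : H ⊗[k] (H ⊗[k] H) →ₗ[k] W) {ι : Type*} {κ μ : ι → Type*} {a : H} (r : Repr k a ι)
    (s : (i : r.ι) → Repr k (r.left i) (κ i)) (t : (i : r.ι) → Repr k (r.right i) (μ i)) :
    ∑ i ∈ r.index, ∑ j ∈ (s i).index,
      L ((s i).left j ⊗ₜ[k] ((s i).right j ⊗ₜ[k] r.right i)) =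
    ∑ i ∈ r.index, ∑ j ∈ (t i).index,
      L (r.left i ⊗ₜ[k] ((t i).left j ⊗ₜ[k] (t i).right j)) := by
  have h := Coalgebra.sum_tmul_tmul_eq r s t
  have h2 := congrArg L h
  simp only [map_sum] at h2
  exact h2

/-- A representation of a product built from representations of the factors. -/
def mulRepr {ι κ : Type*} {a b : H} (ra : Repr k a ι) (rb : Repr k b κ) : Repr k (a * b) (ι × κ) where
  index := ra.index ×ˢ rb.index
  left := fun p => ra.left p.1 * rb.left p.2
  right := fun p => ra.right p.1 * rb.right p.2
  eq := by
    rw [Finset.sum_product]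
    rw [Bialgebra.comul_mul, ← ra.eq, ← rb.eq, Finset.sum_mul_sum]
    simp [Algebra.TensorProduct.tmul_mul_tmul]

end Hopf

section Hopf
variable {k H : Type*} [Field k] [Ring H] [HopfAlgebra k H]

local notation "𝒮" => HopfAlgebra.antipode (R := k)
local notation "ε" => Coalgebra.counit (R := k)
local notation "Δ" => Coalgebra.comul (R := k)

/-- `x ↦ S(x₂) ⊗ S(x₁)`. -/
noncomputable def D2 : H →ₗ[k] H ⊗[k] H :=
  (TensorProduct.map 𝒮 𝒮) ∘ₗ (TensorProduct.comm k H H).toLinearMap ∘ₗ Δ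

lemma D2_repr {ι : Type*} {x : H} (r : Repr k x ι) :
    D2 (k := k) x = ∑ i ∈ r.index, 𝒮 (r.right i) ⊗ₜ[k] 𝒮 (r.left i) := by
  rw [D2, LinearMap.comp_apply, LinearMap.comp_apply, ← r.eq, map_sum, map_sum]
  simp [TensorProduct.comm_tmul]

lemma claim_a {ι : Type*} {x : H} (r : Repr k x ι) :
    ∑ i ∈ r.index, Δ (r.left i) * Δ (𝒮 (r.right i)) = ε x • (1 : H ⊗[k] H) := by
  have : ∀ i, Δ (r.left i) * Δ (𝒮 (r.right i)) = Δ (r.left i * 𝒮 (r.right i)) := by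
    intro i; rw [Bialgebra.comul_mul]
  rw [Finset.sum_congr rfl fun i _ => this i, ← map_sum,
    HopfAlgebra.sum_mul_antipode_eq_smul r, map_smul]
  congr 1
  exact map_one (Bialgebra.comulAlgHom k H)
end Hopf

section Hopf2
variable {k H : Type*} [Field k] [Ring H] [HopfAlgebra k H]

local notation "𝒮" => HopfAlgebra.antipode (R := k)
local notation "ε" => Coalgebra.counit (R := k)
local notation "Δ" => Coalgebra.comul (R := k)

/-- `p ⊗ (q ⊗ c) ↦ (S q ⊗ S p) * Δ c`. -/
noncomputable def Lb : H ⊗[k] (H ⊗[k] H) →ₗ[k] H ⊗[k] H :=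
  (LinearMap.mul' k (H ⊗[k] H)) ∘ₗ
    (TensorProduct.map
      ((TensorProduct.map 𝒮 𝒮) ∘ₗ (TensorProduct.comm k H H).toLinearMap) Δ) ∘ₗ
    (TensorProduct.assoc k H H H).symm.toLinearMap

lemma Lb_tmul (p q c : H) :
    Lb (k := k) (p ⊗ₜ[k] (q ⊗ₜ[k] c)) = (𝒮 q ⊗ₜ[k] 𝒮 p) * Δ c := by
  simp [Lb, TensorProduct.assoc_symm_tmul, TensorProduct.comm_tmul]

/-- `p ⊗ (q ⊗ w) ↦ (S p * q) ⊗ w`. -/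
noncomputable def LcolL : H ⊗[k] (H ⊗[k] H) →ₗ[k] H ⊗[k] H :=
  (TensorProduct.map ((LinearMap.mul' k H) ∘ₗ TensorProduct.map 𝒮 LinearMap.id)
      LinearMap.id) ∘ₗ
    (TensorProduct.assoc k H H H).symm.toLinearMap

lemma LcolL_tmul (p q w : H) :
    LcolL (k := k) (p ⊗ₜ[k] (q ⊗ₜ[k] w)) = (𝒮 p * q) ⊗ₜ[k] w := by
  simp [LcolL, TensorProduct.assoc_symm_tmul]

/-- `∑ S(c₁) c₂ ⊗ c₃ = 1 ⊗ c`. -/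
lemma antipode_collapse {ι : Type*} {κ : ι → Type*} {c : H} (t : Repr k c ι)
    (u : (j : t.ι) → Repr k (t.right j) (κ j)) :
    ∑ j ∈ t.index, ∑ m ∈ (u j).index,
      (𝒮 (t.left j) * (u j).left m) ⊗ₜ[k] (u j).right m = (1:H) ⊗ₜ[k] c := by
  set v := fun j => ℛ k (t.left j) with hv
  calc ∑ j ∈ t.index, ∑ m ∈ (u j).index,
        (𝒮 (t.left j) * (u j).left m) ⊗ₜ[k] (u j).right m
      = ∑ j ∈ t.index, ∑ m ∈ (u j).index,
          LcolL (k := k) (t.left j ⊗ₜ[k] ((u j).left m ⊗ₜ[k] (u j).right m)) := by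
        refine Finset.sum_congr rfl fun j _ => Finset.sum_congr rfl fun m _ => ?_
        rw [LcolL_tmul]
    _ = ∑ j ∈ t.index, ∑ m ∈ (v j).index,
          LcolL (k := k) ((v j).left m ⊗ₜ[k] ((v j).right m ⊗ₜ[k] t.right j)) :=
        (coassoc_switch (LcolL (k := k)) t v u).symm
    _ = ∑ j ∈ t.index, ∑ m ∈ (v j).index,
          (𝒮 ((v j).left m) * (v j).right m) ⊗ₜ[k] t.right j := by
        refine Finset.sum_congr rfl fun j _ => Finset.sum_congr rfl fun m _ => ?_
        rw [LcolL_tmul]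
    _ = ∑ j ∈ t.index, (ε (t.left j) • (1:H)) ⊗ₜ[k] t.right j := by
        refine Finset.sum_congr rfl fun j _ => ?_
        rw [← TensorProduct.sum_tmul, HopfAlgebra.sum_antipode_mul_eq_smul (v j)]
    _ = (1:H) ⊗ₜ[k] c := by
        have : ∀ j ∈ t.index, (ε (t.left j) • (1:H)) ⊗ₜ[k] t.right j
            = (1:H) ⊗ₜ[k] (ε (t.left j) • t.right j) := fun j _ => by
          rw [TensorProduct.smul_tmul]
        rw [Finset.sum_congr rfl this, ← TensorProduct.tmul_sum]
        rw [aux_counit_left t]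

lemma claim_b {ι : Type*} {x : H} (r : Repr k x ι) :
    ∑ i ∈ r.index, D2 (k := k) (r.left i) * Δ (r.right i) = ε x • (1 : H ⊗[k] H) := by
  set s := fun i => ℛ k (r.left i) with hs
  set t := fun i => ℛ k (r.right i) with ht
  set u := fun i (j : (t i).ι) => ℛ k ((t i).right j) with hu
  calc ∑ i ∈ r.index, D2 (k := k) (r.left i) * Δ (r.right i)
      = ∑ i ∈ r.index, ∑ j ∈ (s i).index,
          Lb (k := k) ((s i).left j ⊗ₜ[k] ((s i).right j ⊗ₜ[k] r.right i)) := by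
        refine Finset.sum_congr rfl fun i _ => ?_
        rw [D2_repr (s i), Finset.sum_mul]
        exact Finset.sum_congr rfl fun j _ => by rw [Lb_tmul]
    _ = ∑ i ∈ r.index, ∑ j ∈ (t i).index,
          Lb (k := k) (r.left i ⊗ₜ[k] ((t i).left j ⊗ₜ[k] (t i).right j)) :=
        coassoc_switch (Lb (k := k)) r s t
    _ = ∑ i ∈ r.index, ∑ j ∈ (t i).index, ∑ m ∈ (u i j).index,
          (𝒮 ((t i).left j) * (u i j).left m) ⊗ₜ[k] (𝒮 (r.left i) * (u i j).right m) := by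
        refine Finset.sum_congr rfl fun i _ => Finset.sum_congr rfl fun j _ => ?_
        rw [Lb_tmul, ← (u i j).eq, Finset.mul_sum]
        exact Finset.sum_congr rfl fun m _ => by
          rw [Algebra.TensorProduct.tmul_mul_tmul]
    _ = ∑ i ∈ r.index,
          (TensorProduct.map LinearMap.id (LinearMap.mulLeft k (𝒮 (r.left i))))
            (∑ j ∈ (t i).index, ∑ m ∈ (u i j).index,
              (𝒮 ((t i).left j) * (u i j).left m) ⊗ₜ[k] (u i j).right m) := by
        refine Finset.sum_congr rfl fun i _ => ?_
        rw [map_sum]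
        refine Finset.sum_congr rfl fun j _ => ?_
        rw [map_sum]
        exact Finset.sum_congr rfl fun m _ => by
          simp [TensorProduct.map_tmul]
    _ = ∑ i ∈ r.index, (1:H) ⊗ₜ[k] (𝒮 (r.left i) * r.right i) := by
        refine Finset.sum_congr rfl fun i _ => ?_
        rw [antipode_collapse (t i) (u i)]
        simp [TensorProduct.map_tmul]
    _ = ε x • (1 : H ⊗[k] H) := by
        rw [← TensorProduct.tmul_sum, HopfAlgebra.sum_antipode_mul_eq_smul r,
          TensorProduct.tmul_smul, Algebra.TensorProduct.one_def]

/-- `p ⊗ (q ⊗ c) ↦ D2 p * (Δ q * Δ (S c))`. -/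
noncomputable def Lc : H ⊗[k] (H ⊗[k] H) →ₗ[k] H ⊗[k] H :=
  (LinearMap.mul' k (H ⊗[k] H)) ∘ₗ
    (TensorProduct.map (D2 (k := k))
      ((LinearMap.mul' k (H ⊗[k] H)) ∘ₗ TensorProduct.map Δ (Δ ∘ₗ 𝒮)))

lemma Lc_tmul (p q c : H) :
    Lc (k := k) (p ⊗ₜ[k] (q ⊗ₜ[k] c)) = D2 (k := k) p * (Δ q * Δ (𝒮 c)) := by
  simp [Lc]

/-- The antipode is an anti-coalgebra morphism: `Δ(S x) = S(x₂) ⊗ S(x₁)`. -/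
lemma comul_antipode (x : H) : Δ (𝒮 x) = D2 (k := k) x := by
  set r := ℛ k x with hr
  set s := fun i => ℛ k (r.left i) with hs
  set t := fun i => ℛ k (r.right i) with ht
  have G1 : ∑ i ∈ r.index, ∑ j ∈ (s i).index,
      Lc (k := k) ((s i).left j ⊗ₜ[k] ((s i).right j ⊗ₜ[k] r.right i)) = Δ (𝒮 x) := by
    calc ∑ i ∈ r.index, ∑ j ∈ (s i).index,
          Lc (k := k) ((s i).left j ⊗ₜ[k] ((s i).right j ⊗ₜ[k] r.right i))
        = ∑ i ∈ r.index,
            (∑ j ∈ (s i).index, D2 (k := k) ((s i).left j) * Δ ((s i).right j))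
              * Δ (𝒮 (r.right i)) := by
          refine Finset.sum_congr rfl fun i _ => ?_
          rw [Finset.sum_mul]
          refine Finset.sum_congr rfl fun j _ => ?_
          rw [Lc_tmul, mul_assoc]
      _ = ∑ i ∈ r.index, ε (r.left i) • Δ (𝒮 (r.right i)) := by
          refine Finset.sum_congr rfl fun i _ => ?_
          rw [claim_b (s i), smul_mul_assoc, one_mul]
      _ = Δ (𝒮 x) := by
          conv_rhs => rw [← aux_counit_left r]
          simp only [map_sum, map_smul]
  have G2 : ∑ i ∈ r.index, ∑ j ∈ (t i).index,
      Lc (k := k) (r.left i ⊗ₜ[k] ((t i).left j ⊗ₜ[k] (t i).right j)) = D2 (k := k) x := by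
    calc ∑ i ∈ r.index, ∑ j ∈ (t i).index,
          Lc (k := k) (r.left i ⊗ₜ[k] ((t i).left j ⊗ₜ[k] (t i).right j))
        = ∑ i ∈ r.index, D2 (k := k) (r.left i) *
            (∑ j ∈ (t i).index, Δ ((t i).left j) * Δ (𝒮 ((t i).right j))) := by
          refine Finset.sum_congr rfl fun i _ => ?_
          rw [Finset.mul_sum]
          exact Finset.sum_congr rfl fun j _ => by rw [Lc_tmul]
      _ = ∑ i ∈ r.index, ε (r.right i) • D2 (k := k) (r.left i) := by
          refine Finset.sum_congr rfl fun i _ => ?_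
          rw [claim_a (t i), mul_smul_comm, mul_one]
      _ = D2 (k := k) x := by
          conv_rhs => rw [← aux_counit_right r]
          simp only [map_sum, map_smul]
  rw [← G1, coassoc_switch (Lc (k := k)) r s t, G2]

end Hopf2
universe w
section HopfU
variable {k H : Type*} [Field k] [Ring H] [HopfAlgebra k H]

/-- Reindex a representation through `ULift (Fin n)`, to move it to any universe. -/
noncomputable def uRepr {ι : Type*} {a : H} (r : Coalgebra.Repr k a ι) :
    Coalgebra.Repr k a (ULift.{w} (Fin r.index.card)) where
  index := Finset.univ
  left := fun i => r.left (r.index.equivFin.symm i.down)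
  right := fun i => r.right (r.index.equivFin.symm i.down)
  eq := by
    rw [← r.eq, ← Finset.sum_coe_sort r.index (fun j => r.left j ⊗ₜ[k] r.right j)]
    exact Fintype.sum_equiv (Equiv.ulift.trans r.index.equivFin.symm) _ _ (fun i => rfl)

lemma repr_rsum (lam : H →ₗ[k] k) {ι : Type*} {x : H} (r : Coalgebra.Repr k x ι) :
    ∑ i ∈ r.index, lam (r.left i) • r.right i =
      (TensorProduct.lid k H) (LinearMap.rTensor H lam (Coalgebra.comul (R := k) x)) := by
  rw [← r.eq, map_sum, map_sum]
  simp

/-- `hlam` holds for representations in every universe. -/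
lemma hlam_of (lam : H →ₗ[k] k)
    (hlam : ∀ (x : H) {ι : Type*} (r : Coalgebra.Repr k x ι),
      ∑ i ∈ r.index, lam (r.left i) • r.right i = lam x • (1 : H))
    {κ : Type*} {x : H} (r : Coalgebra.Repr k x κ) :
    ∑ i ∈ r.index, lam (r.left i) • r.right i = lam x • (1 : H) := by
  rw [repr_rsum lam r]
  have := hlam x (uRepr (ℛ k x))
  rw [repr_rsum] at this
  exact this

end HopfU
section Hopf3
variable {k H : Type*} [Field k] [Ring H] [HopfAlgebra k H]

local notation "𝒮" => HopfAlgebra.antipode (R := k)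
local notation "ε" => Coalgebra.counit (R := k)
local notation "Δ" => Coalgebra.comul (R := k)

/-- `p ⊗ (q ⊗ w) ↦ lam(a * p) • (b * (q * S w))`. -/
noncomputable def Lstar (lam : H →ₗ[k] k) (a b : H) : H ⊗[k] (H ⊗[k] H) →ₗ[k] H :=
  (TensorProduct.lid k H).toLinearMap ∘ₗ
    TensorProduct.map (lam ∘ₗ LinearMap.mulLeft k a)
      ((LinearMap.mulLeft k b) ∘ₗ (LinearMap.mul' k H) ∘ₗ
        TensorProduct.map LinearMap.id 𝒮)

lemma Lstar_tmul (lam : H →ₗ[k] k) (a b p q w : H) :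
    Lstar lam a b (p ⊗ₜ[k] (q ⊗ₜ[k] w)) = lam (a * p) • (b * (q * 𝒮 w)) := by
  simp [Lstar]

/-- The fundamental identity `λ(a₁ b) a₂ = λ(a b₁) S(b₂)` for a right integral `λ`. -/
lemma star_lemma (lam : H →ₗ[k] k)
    (hlam : ∀ (x : H) {ι : Type*} (r : Coalgebra.Repr k x ι),
      ∑ i ∈ r.index, lam (r.left i) • r.right i = lam x • (1 : H))
    {ι κ : Type*} {a b : H} (ra : Repr k a ι) (rb : Repr k b κ) :
    ∑ i ∈ ra.index, lam (ra.left i * b) • ra.right i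
      = ∑ j ∈ rb.index, lam (a * rb.left j) • 𝒮 (rb.right j) := by
  set s := fun j => ℛ k (rb.left j) with hs
  set t := fun j => ℛ k (rb.right j) with ht
  have key : ∀ j, ∑ p ∈ ra.index ×ˢ (s j).index,
      lam (ra.left p.1 * (s j).left p.2) •
        (ra.right p.1 * (s j).right p.2 * 𝒮 (rb.right j))
      = lam (a * rb.left j) • 𝒮 (rb.right j) := by
    intro j
    have h := hlam_of lam hlam (mulRepr ra (s j))
    have h2 := congrArg (fun y => y * 𝒮 (rb.right j)) h
    simp only [Finset.sum_mul, smul_mul_assoc, one_mul] at h2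
    exact h2
  calc ∑ i ∈ ra.index, lam (ra.left i * b) • ra.right i
      = ∑ i ∈ ra.index, ∑ j ∈ rb.index,
          (ε (rb.right j) * lam (ra.left i * rb.left j)) • ra.right i := by
        refine Finset.sum_congr rfl fun i _ => ?_
        rw [← Finset.sum_smul]
        congr 1
        conv_lhs => rw [← aux_counit_right rb]
        simp only [Finset.mul_sum, mul_smul_comm, map_sum, map_smul, smul_eq_mul]
    _ = ∑ i ∈ ra.index, ∑ j ∈ rb.index, ∑ l ∈ (t j).index,
          Lstar lam (ra.left i) (ra.right i)
            (rb.left j ⊗ₜ[k] ((t j).left l ⊗ₜ[k] (t j).right l)) := by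
        refine Finset.sum_congr rfl fun i _ => Finset.sum_congr rfl fun j _ => ?_
        have : ∑ l ∈ (t j).index, Lstar lam (ra.left i) (ra.right i)
            (rb.left j ⊗ₜ[k] ((t j).left l ⊗ₜ[k] (t j).right l))
            = lam (ra.left i * rb.left j) •
                (ra.right i * ∑ l ∈ (t j).index, (t j).left l * 𝒮 ((t j).right l)) := by
          rw [Finset.mul_sum, Finset.smul_sum]
          exact Finset.sum_congr rfl fun l _ => by rw [Lstar_tmul]
        rw [this, HopfAlgebra.sum_mul_antipode_eq_smul (t j), mul_smul_comm, mul_one,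
          smul_smul, mul_comm (lam _) (ε _)]
    _ = ∑ i ∈ ra.index, ∑ j ∈ rb.index, ∑ l ∈ (s j).index,
          Lstar lam (ra.left i) (ra.right i)
            ((s j).left l ⊗ₜ[k] ((s j).right l ⊗ₜ[k] rb.right j)) := by
        refine Finset.sum_congr rfl fun i _ => ?_
        exact (coassoc_switch (Lstar lam (ra.left i) (ra.right i)) rb s t).symm
    _ = ∑ j ∈ rb.index, lam (a * rb.left j) • 𝒮 (rb.right j) := by
        rw [Finset.sum_comm]
        refine Finset.sum_congr rfl fun j _ => ?_
        rw [← key j, Finset.sum_product]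
        refine Finset.sum_congr rfl fun i _ => Finset.sum_congr rfl fun l _ => ?_
        rw [Lstar_tmul, mul_assoc]

end Hopf3
section Hopf4
variable {k H : Type*} [Field k] [Ring H] [HopfAlgebra k H]

local notation "𝒮" => HopfAlgebra.antipode (R := k)
local notation "ε" => Coalgebra.counit (R := k)
local notation "Δ" => Coalgebra.comul (R := k)

lemma counit_antipode (x : H) : ε (𝒮 x) = ε x := by
  have h := congrArg ε (HopfAlgebra.sum_antipode_mul_eq_smul (ℛ k x))
  rw [map_sum, map_smul] at h
  simp only [Bialgebra.counit_mul, Bialgebra.counit_one, smul_eq_mul, mul_one] at h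
  calc ε (𝒮 x) = ε (𝒮 (∑ i ∈ (ℛ k x).index,
        ε ((ℛ k x).right i) • (ℛ k x).left i)) := by rw [aux_counit_right (ℛ k x)]
    _ = ∑ i ∈ (ℛ k x).index, ε (𝒮 ((ℛ k x).left i)) * ε ((ℛ k x).right i) := by
        rw [map_sum, map_sum]
        exact Finset.sum_congr rfl fun i _ => by
          rw [map_smul, map_smul, smul_eq_mul, mul_comm]
    _ = ε x := h

variable (lam : H →ₗ[k] k)
  (hlam : ∀ (x : H) {ι : Type*} (r : Coalgebra.Repr k x ι),
    ∑ i ∈ r.index, lam (r.left i) • r.right i = lam x • (1 : H))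
  (Λ : H)
  (hΛ : ∀ x : H, x * Λ = Coalgebra.counit (R := k) x • Λ)
  (hpair : lam Λ = 1)
  (ν : H →ₐ[k] k) (hν : ∀ x : H, Λ * x = ν x • Λ)

include hlam hΛ hpair in
/-- `a = λ(a Λ₁) S(Λ₂)` for all `a`. -/
lemma lemma_M (a : H) {ι : Type*} (rΛ : Coalgebra.Repr k Λ ι) :
    a = ∑ i ∈ rΛ.index, lam (a * rΛ.left i) • 𝒮 (rΛ.right i) := by
  have h := star_lemma lam hlam (ℛ k a) rΛ
  rw [← h]
  have : ∀ i ∈ (ℛ k a).index, lam ((ℛ k a).left i * Λ) • (ℛ k a).right i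
      = ε ((ℛ k a).left i) • (ℛ k a).right i := fun i _ => by
    rw [hΛ, map_smul, smul_eq_mul, hpair, mul_one]
  rw [Finset.sum_congr rfl this, aux_counit_left (ℛ k a)]

include hlam hΛ hpair hν in
/-- `λ(Λ₁ b) ν(Λ₂) = ε(b)` for all `b`. -/
lemma key1 (b : H) {ι : Type*} (rΛ : Coalgebra.Repr k Λ ι) :
    ∑ i ∈ rΛ.index, ν (rΛ.right i) * lam (rΛ.left i * b) = ε b := by
  have h := star_lemma lam hlam rΛ (ℛ k b)
  have h2 := congrArg ν h
  rw [map_sum, map_sum] at h2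
  calc ∑ i ∈ rΛ.index, ν (rΛ.right i) * lam (rΛ.left i * b)
      = ∑ i ∈ rΛ.index, ν (lam (rΛ.left i * b) • rΛ.right i) := by
        exact Finset.sum_congr rfl fun i _ => by
          rw [map_smul, smul_eq_mul, mul_comm]
    _ = ∑ j ∈ (ℛ k b).index, ν (lam (Λ * (ℛ k b).left j) • 𝒮 ((ℛ k b).right j)) := h2
    _ = ∑ j ∈ (ℛ k b).index, ν ((ℛ k b).left j * 𝒮 ((ℛ k b).right j)) := by
        refine Finset.sum_congr rfl fun j _ => ?_
        rw [hν]
        simp only [map_smul, smul_eq_mul, hpair, mul_one, map_mul]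
    _ = ν (∑ j ∈ (ℛ k b).index, (ℛ k b).left j * 𝒮 ((ℛ k b).right j)) := (map_sum ν _ _).symm
    _ = ε b := by
        rw [HopfAlgebra.sum_mul_antipode_eq_smul (ℛ k b), map_smul, smul_eq_mul,
          map_one, mul_one]

include hlam hΛ hpair hν in
/-- `S(Λ) = ν(Λ₂) Λ₁`. -/
lemma lemma_K' {ι : Type*} (rΛ : Coalgebra.Repr k Λ ι) :
    𝒮 Λ = ∑ i ∈ rΛ.index, ν (rΛ.right i) • rΛ.left i := by
  set P : H := ∑ i ∈ rΛ.index, ν (rΛ.right i) • rΛ.left i with hP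
  have hPx : ∀ x : H, lam (P * x) = ε x := by
    intro x
    rw [hP, Finset.sum_mul]
    have : ∀ i ∈ rΛ.index, ν (rΛ.right i) • rΛ.left i * x
        = ν (rΛ.right i) • (rΛ.left i * x) := fun i _ => by rw [smul_mul_assoc]
    rw [Finset.sum_congr rfl this, map_sum]
    simp only [map_smul, smul_eq_mul]
    exact key1 lam hlam Λ hΛ hpair ν hν x rΛ
  have hM := lemma_M lam hlam Λ hΛ hpair P rΛ
  have hstep : ∀ i ∈ rΛ.index, lam (P * rΛ.left i) • 𝒮 (rΛ.right i)
      = ε (rΛ.left i) • 𝒮 (rΛ.right i) := fun i _ => by rw [hPx]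
  have : P = 𝒮 Λ := by
    calc P = ∑ i ∈ rΛ.index, lam (P * rΛ.left i) • 𝒮 (rΛ.right i) := hM
      _ = ∑ i ∈ rΛ.index, ε (rΛ.left i) • 𝒮 (rΛ.right i) := Finset.sum_congr rfl hstep
      _ = 𝒮 (∑ i ∈ rΛ.index, ε (rΛ.left i) • rΛ.right i) := by
          rw [map_sum]; exact Finset.sum_congr rfl fun i _ => (map_smul _ _ _).symm
      _ = 𝒮 Λ := by rw [aux_counit_left rΛ]
  exact this.symm

include hlam hΛ hpair hν in
/-- `λ(S(Λ) u) = ε(u)`. -/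
lemma lemma_R (u : H) : lam (𝒮 Λ * u) = ε u := by
  rw [lemma_K' lam hlam Λ hΛ hpair ν hν (ℛ k Λ), Finset.sum_mul]
  have : ∀ i ∈ (ℛ k Λ).index, ν ((ℛ k Λ).right i) • (ℛ k Λ).left i * u
      = ν ((ℛ k Λ).right i) • ((ℛ k Λ).left i * u) := fun i _ => by rw [smul_mul_assoc]
  rw [Finset.sum_congr rfl this, map_sum]
  simp only [map_smul, smul_eq_mul]
  exact key1 lam hlam Λ hΛ hpair ν hν u (ℛ k Λ)

end Hopf4
section Hopf5
variable {k H : Type*} [Field k] [Ring H] [HopfAlgebra k H]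

local notation "𝒮" => HopfAlgebra.antipode (R := k)
local notation "ε" => Coalgebra.counit (R := k)
local notation "Δ" => Coalgebra.comul (R := k)

/-- A representation of `S c` obtained from one of `c`. -/
noncomputable def sRepr {ι : Type*} {c : H} (t : Coalgebra.Repr k c ι) :
    Coalgebra.Repr k (𝒮 c) ι where
  index := t.index
  left := fun j => 𝒮 (t.right j)
  right := fun j => 𝒮 (t.left j)
  eq := by rw [comul_antipode, D2_repr t]

/-- `p ⊗ (q ⊗ w) ↦ ν(w) • (p ⊗ q)`. -/
noncomputable def Lnu (ν : H →ₐ[k] k) : H ⊗[k] (H ⊗[k] H) →ₗ[k] H ⊗[k] H :=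
  (TensorProduct.rid k (H ⊗[k] H)).toLinearMap ∘ₗ
    TensorProduct.map LinearMap.id ν.toLinearMap ∘ₗ
    (TensorProduct.assoc k H H H).symm.toLinearMap

lemma Lnu_tmul (ν : H →ₐ[k] k) (p q w : H) :
    Lnu ν (p ⊗ₜ[k] (q ⊗ₜ[k] w)) = ν w • (p ⊗ₜ[k] q) := by
  simp [Lnu, TensorProduct.assoc_symm_tmul]

variable (lam : H →ₗ[k] k)
  (hlam : ∀ (x : H) {ι : Type*} (r : Coalgebra.Repr k x ι),
    ∑ i ∈ r.index, lam (r.left i) • r.right i = lam x • (1 : H))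
  (Λ : H)
  (hΛ : ∀ x : H, x * Λ = Coalgebra.counit (R := k) x • Λ)
  (hpair : lam Λ = 1)
  (ν : H →ₐ[k] k) (hν : ∀ x : H, Λ * x = ν x • Λ)

include hlam hΛ hpair hν in
/-- `Δ(SΛ) = ν(Λ₃) • Λ₁ ⊗ Λ₂`. -/
lemma comul_SL {ι : Type*} {κ : ι → Type*} (rΛ : Coalgebra.Repr k Λ ι)
    (t : (i : rΛ.ι) → Coalgebra.Repr k (rΛ.right i) (κ i)) :
    Δ (𝒮 Λ) = ∑ i ∈ rΛ.index, ∑ j ∈ (t i).index,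
      ν ((t i).right j) • (rΛ.left i ⊗ₜ[k] (t i).left j) := by
  set s := fun i => ℛ k (rΛ.left i) with hs
  calc Δ (𝒮 Λ)
      = Δ (∑ i ∈ rΛ.index, ν (rΛ.right i) • rΛ.left i) := by
        rw [← lemma_K' lam hlam Λ hΛ hpair ν hν rΛ]
    _ = ∑ i ∈ rΛ.index, ∑ j ∈ (s i).index,
          Lnu ν ((s i).left j ⊗ₜ[k] ((s i).right j ⊗ₜ[k] rΛ.right i)) := by
        rw [map_sum]
        refine Finset.sum_congr rfl fun i _ => ?_
        rw [map_smul, ← (s i).eq, Finset.smul_sum]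
        exact Finset.sum_congr rfl fun j _ => by rw [Lnu_tmul]
    _ = ∑ i ∈ rΛ.index, ∑ j ∈ (t i).index,
          Lnu ν (rΛ.left i ⊗ₜ[k] ((t i).left j ⊗ₜ[k] (t i).right j)) :=
        coassoc_switch (Lnu ν) rΛ s t
    _ = ∑ i ∈ rΛ.index, ∑ j ∈ (t i).index,
          ν ((t i).right j) • (rΛ.left i ⊗ₜ[k] (t i).left j) := by
        exact Finset.sum_congr rfl fun i _ => Finset.sum_congr rfl fun j _ => by
          rw [Lnu_tmul]

/-- `p ⊗ (q ⊗ w) ↦ λ(S(w) u) • ((p * S q) * v)`. -/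
noncomputable def Lgen (lam : H →ₗ[k] k) (u v : H) : H ⊗[k] (H ⊗[k] H) →ₗ[k] H :=
  (TensorProduct.rid k H).toLinearMap ∘ₗ
    TensorProduct.map
      ((LinearMap.mulRight k v) ∘ₗ (LinearMap.mul' k H) ∘ₗ
        TensorProduct.map LinearMap.id 𝒮)
      (lam ∘ₗ LinearMap.mulRight k u ∘ₗ 𝒮) ∘ₗ
    (TensorProduct.assoc k H H H).symm.toLinearMap

lemma Lgen_tmul (u v p q w : H) :
    Lgen lam u v (p ⊗ₜ[k] (q ⊗ₜ[k] w)) = lam (𝒮 w * u) • ((p * 𝒮 q) * v) := by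
  simp [Lgen, TensorProduct.assoc_symm_tmul]

include hlam hΛ hpair hν in
/-- `λ(S(Λ₂) y) Λ₁ = λ(S(Λ) y₁) y₂`. -/
lemma hgenL {ι κ : Type*} (rΛ : Coalgebra.Repr k Λ ι) {y : H} (ry : Coalgebra.Repr k y κ) :
    ∑ i ∈ rΛ.index, lam (𝒮 (rΛ.right i) * y) • rΛ.left i
      = ∑ l ∈ ry.index, lam (𝒮 Λ * ry.left l) • ry.right l := by
  set t := fun i => ℛ k (rΛ.right i) with ht
  set s := fun i => ℛ k (rΛ.left i) with hs
  have hX : ∀ i, ∑ j ∈ (t i).index, ∑ l ∈ ry.index,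
      lam (𝒮 ((t i).right j) * ry.left l) •
        (rΛ.left i * (𝒮 ((t i).left j) * ry.right l))
      = lam (𝒮 (rΛ.right i) * y) • rΛ.left i := by
    intro i
    have h := hlam_of lam hlam (mulRepr (sRepr (t i)) ry)
    have h2 := congrArg (fun c => rΛ.left i * c) h
    simp only [Finset.mul_sum, mul_smul_comm, mul_one] at h2
    rw [← Finset.sum_product ((t i).index) ry.index
      (fun p => lam (𝒮 ((t i).right p.1) * ry.left p.2) •
        (rΛ.left i * (𝒮 ((t i).left p.1) * ry.right p.2)))]
    exact h2
  calc ∑ i ∈ rΛ.index, lam (𝒮 (rΛ.right i) * y) • rΛ.left i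
      = ∑ i ∈ rΛ.index, ∑ j ∈ (t i).index, ∑ l ∈ ry.index,
          lam (𝒮 ((t i).right j) * ry.left l) •
            (rΛ.left i * (𝒮 ((t i).left j) * ry.right l)) :=
        (Finset.sum_congr rfl fun i _ => hX i).symm
    _ = ∑ i ∈ rΛ.index, ∑ j ∈ (t i).index, ∑ l ∈ ry.index,
          Lgen lam (ry.left l) (ry.right l)
            (rΛ.left i ⊗ₜ[k] ((t i).left j ⊗ₜ[k] (t i).right j)) := by
        refine Finset.sum_congr rfl fun i _ => Finset.sum_congr rfl fun j _ =>
          Finset.sum_congr rfl fun l _ => ?_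
        rw [Lgen_tmul, mul_assoc]
    _ = ∑ i ∈ rΛ.index, ∑ l ∈ ry.index, ∑ j ∈ (t i).index,
          Lgen lam (ry.left l) (ry.right l)
            (rΛ.left i ⊗ₜ[k] ((t i).left j ⊗ₜ[k] (t i).right j)) :=
        Finset.sum_congr rfl fun i _ => Finset.sum_comm
    _ = ∑ l ∈ ry.index, ∑ i ∈ rΛ.index, ∑ j ∈ (t i).index,
          Lgen lam (ry.left l) (ry.right l)
            (rΛ.left i ⊗ₜ[k] ((t i).left j ⊗ₜ[k] (t i).right j)) :=
        Finset.sum_comm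
    _ = ∑ l ∈ ry.index, ∑ i ∈ rΛ.index, ∑ j ∈ (s i).index,
          Lgen lam (ry.left l) (ry.right l)
            ((s i).left j ⊗ₜ[k] ((s i).right j ⊗ₜ[k] rΛ.right i)) :=
        Finset.sum_congr rfl fun l _ =>
          (coassoc_switch (Lgen lam (ry.left l) (ry.right l)) rΛ s t).symm
    _ = ∑ l ∈ ry.index, lam (𝒮 Λ * ry.left l) • ry.right l := by
        refine Finset.sum_congr rfl fun l _ => ?_
        have inner : ∀ i ∈ rΛ.index, ∑ j ∈ (s i).index,
            Lgen lam (ry.left l) (ry.right l)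
              ((s i).left j ⊗ₜ[k] ((s i).right j ⊗ₜ[k] rΛ.right i))
            = (ε (rΛ.left i) * lam (𝒮 (rΛ.right i) * ry.left l)) • ry.right l := by
          intro i _
          have e1 : ∀ j ∈ (s i).index,
              Lgen lam (ry.left l) (ry.right l)
                ((s i).left j ⊗ₜ[k] ((s i).right j ⊗ₜ[k] rΛ.right i))
              = lam (𝒮 (rΛ.right i) * ry.left l) •
                  (((s i).left j * 𝒮 ((s i).right j)) * ry.right l) := fun j _ => by
            rw [Lgen_tmul]
          rw [Finset.sum_congr rfl e1, ← Finset.smul_sum, ← Finset.sum_mul,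
            HopfAlgebra.sum_mul_antipode_eq_smul (s i), smul_mul_assoc, one_mul,
            smul_smul, mul_comm (lam _) (ε _)]
        rw [Finset.sum_congr rfl inner, ← Finset.sum_smul]
        congr 1
        calc ∑ i ∈ rΛ.index, ε (rΛ.left i) * lam (𝒮 (rΛ.right i) * ry.left l)
            = lam ((∑ i ∈ rΛ.index, ε (rΛ.left i) • 𝒮 (rΛ.right i)) * ry.left l) := by
              rw [Finset.sum_mul, map_sum]
              exact Finset.sum_congr rfl fun i _ => by
                rw [smul_mul_assoc, map_smul, smul_eq_mul]
          _ = lam (𝒮 Λ * ry.left l) := by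
              congr 2
              calc ∑ i ∈ rΛ.index, ε (rΛ.left i) • 𝒮 (rΛ.right i)
                  = 𝒮 (∑ i ∈ rΛ.index, ε (rΛ.left i) • rΛ.right i) := by
                    rw [map_sum]
                    exact Finset.sum_congr rfl fun i _ => (map_smul _ _ _).symm
                _ = 𝒮 Λ := by rw [aux_counit_left rΛ]

end Hopf5
section Hopf6
variable {k H : Type*} [Field k] [Ring H] [HopfAlgebra k H]

local notation "𝒮" => HopfAlgebra.antipode (R := k)
local notation "ε" => Coalgebra.counit (R := k)
local notation "Δ" => Coalgebra.comul (R := k)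

lemma actnu_S (ν : H →ₐ[k] k) (c : H) :
    actnu ν (𝒮 c) = ∑ m ∈ (ℛ k c).index,
      ν (𝒮 ((ℛ k c).right m)) • 𝒮 ((ℛ k c).left m) := by
  rw [actnu]
  simp only [LinearMap.comp_apply, LinearEquiv.coe_coe]
  rw [← (sRepr (ℛ k c)).eq, map_sum, map_sum]
  refine Finset.sum_congr rfl fun m _ => ?_
  simp [sRepr]

lemma hstar_eq (lam : H →ₗ[k] k) (x w : H) :
    hstar lam x w = (TensorProduct.rid k H)
      ((TensorProduct.map LinearMap.id (lam ∘ₗ LinearMap.mulLeft k x ∘ₗ 𝒮)) (Δ w)) := rfl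

/-- `p ⊗ (q ⊗ w) ↦ (λ(S(p) z) * (ν(S q) * ν w)) • a`. -/
noncomputable def Lfin (lam : H →ₗ[k] k) (ν : H →ₐ[k] k) (z a : H) :
    H ⊗[k] (H ⊗[k] H) →ₗ[k] H :=
  (LinearMap.toSpanSingleton k H a) ∘ₗ
    (LinearMap.mul' k k) ∘ₗ
    TensorProduct.map (lam ∘ₗ LinearMap.mulRight k z ∘ₗ 𝒮)
      ((LinearMap.mul' k k) ∘ₗ TensorProduct.map (ν.toLinearMap ∘ₗ 𝒮) ν.toLinearMap)

lemma Lfin_tmul (lam : H →ₗ[k] k) (ν : H →ₐ[k] k) (z a p q w : H) :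
    Lfin lam ν z a (p ⊗ₜ[k] (q ⊗ₜ[k] w))
      = (lam (𝒮 p * z) * (ν (𝒮 q) * ν w)) • a := by
  simp [Lfin, LinearMap.toSpanSingleton_apply, mul_assoc]

end Hopf6

theorem stmt4 {k H : Type*} [Field k] [Ring H] [HopfAlgebra k H] [FiniteDimensional k H]
    (lam : H →ₗ[k] k)
    (hlam : ∀ (x : H) {ι : Type*} (r : Coalgebra.Repr k x ι),
      ∑ i ∈ r.index, lam (r.left i) • r.right i = lam x • (1 : H))
    (Λ : H) (hΛ0 : Λ ≠ 0)
    (hΛ : ∀ x : H, x * Λ = Coalgebra.counit (R := k) x • Λ)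
    (hpair : lam Λ = 1) (hpair' : lam (HopfAlgebra.antipode (R := k) Λ) = 1)
    (ν : H →ₐ[k] k) (hν : ∀ x : H, Λ * x = ν x • Λ) :
    ∀ z : H, (∀ w : H, actnu ν w * z = z * w) →
      hstar lam z (HopfAlgebra.antipode (R := k) Λ) = z ∧
      hstar lam (HopfAlgebra.antipode (R := k) Λ) z = z := by
  intro z hz
  set rz := ℛ k z with hrz
  constructor
  · -- z ⋆ S(Λ) = z
    set rΛ := ℛ k Λ with hrΛ
    set t : (i : rΛ.ι) → Coalgebra.Repr k (rΛ.right i) (H × H) :=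
      fun i => ℛ k (rΛ.right i) with htdef
    set u : (i : rΛ.ι) → (j : (t i).ι) → Coalgebra.Repr k ((t i).left j) (H × H) :=
      fun i j => ℛ k ((t i).left j) with hudef
    set w : (i : rΛ.ι) → (j : (t i).ι) → Coalgebra.Repr k ((t i).right j) (H × H) :=
      fun i j => ℛ k ((t i).right j) with hwdef
    have hzS : ∀ c : H, lam (z * HopfAlgebra.antipode (R := k) c) = ∑ m ∈ (ℛ k c).index,
        ν (HopfAlgebra.antipode (R := k) ((ℛ k c).right m)) *
          lam (HopfAlgebra.antipode (R := k) ((ℛ k c).left m) * z) := by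
      intro c
      have h1 : z * HopfAlgebra.antipode (R := k) c = ∑ m ∈ (ℛ k c).index,
          ν (HopfAlgebra.antipode (R := k) ((ℛ k c).right m)) •
            (HopfAlgebra.antipode (R := k) ((ℛ k c).left m) * z) := by
        rw [← hz (HopfAlgebra.antipode (R := k) c), actnu_S, Finset.sum_mul]
        exact Finset.sum_congr rfl fun m _ => by rw [smul_mul_assoc]
      rw [h1, map_sum]
      exact Finset.sum_congr rfl fun m _ => by rw [map_smul, smul_eq_mul]
    calc hstar lam z (HopfAlgebra.antipode (R := k) Λ)
        = ∑ i ∈ rΛ.index, ∑ j ∈ (t i).index,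
            (ν ((t i).right j) *
              lam (z * HopfAlgebra.antipode (R := k) ((t i).left j))) • rΛ.left i := by
          rw [hstar_eq, comul_SL lam hlam Λ hΛ hpair ν hν rΛ t, map_sum, map_sum]
          refine Finset.sum_congr rfl fun i _ => ?_
          rw [map_sum, map_sum]
          refine Finset.sum_congr rfl fun j _ => ?_
          rw [map_smul, map_smul]
          simp only [TensorProduct.map_tmul, LinearMap.id_coe, id_eq,
            LinearMap.comp_apply, LinearMap.mulLeft_apply, TensorProduct.rid_tmul]
          rw [smul_smul]
      _ = ∑ i ∈ rΛ.index, ∑ j ∈ (t i).index, ∑ m ∈ (u i j).index,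
            Lfin lam ν z (rΛ.left i)
              ((u i j).left m ⊗ₜ[k] ((u i j).right m ⊗ₜ[k] (t i).right j)) := by
          refine Finset.sum_congr rfl fun i _ => Finset.sum_congr rfl fun j _ => ?_
          rw [hzS ((t i).left j), Finset.mul_sum, Finset.sum_smul]
          refine Finset.sum_congr rfl fun m _ => ?_
          rw [Lfin_tmul]
          congr 1
          ring
      _ = ∑ i ∈ rΛ.index, ∑ j ∈ (t i).index, ∑ m ∈ (w i j).index,
            Lfin lam ν z (rΛ.left i)
              ((t i).left j ⊗ₜ[k] ((w i j).left m ⊗ₜ[k] (w i j).right m)) :=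
          Finset.sum_congr rfl fun i _ =>
            coassoc_switch (Lfin lam ν z (rΛ.left i)) (t i) (u i) (w i)
      _ = ∑ i ∈ rΛ.index, ∑ j ∈ (t i).index,
            (lam (HopfAlgebra.antipode (R := k) ((t i).left j) * z) *
              Coalgebra.counit (R := k) ((t i).right j)) • rΛ.left i := by
          refine Finset.sum_congr rfl fun i _ => Finset.sum_congr rfl fun j _ => ?_
          have e1 : ∀ m ∈ (w i j).index,
              Lfin lam ν z (rΛ.left i)
                ((t i).left j ⊗ₜ[k] ((w i j).left m ⊗ₜ[k] (w i j).right m))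
              = (lam (HopfAlgebra.antipode (R := k) ((t i).left j) * z) *
                  ν (HopfAlgebra.antipode (R := k) ((w i j).left m) * (w i j).right m))
                    • rΛ.left i := fun m _ => by
            rw [Lfin_tmul, ← map_mul ν (HopfAlgebra.antipode (R := k) ((w i j).left m))
              ((w i j).right m)]
          rw [Finset.sum_congr rfl e1, ← Finset.sum_smul]
          congr 1
          rw [← Finset.mul_sum, ← map_sum, HopfAlgebra.sum_antipode_mul_eq_smul (w i j),
            map_smul, smul_eq_mul, map_one, mul_one]
      _ = ∑ i ∈ rΛ.index,
            lam (HopfAlgebra.antipode (R := k) (rΛ.right i) * z) • rΛ.left i := by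
          refine Finset.sum_congr rfl fun i _ => ?_
          rw [← Finset.sum_smul]
          congr 1
          have e2 : ∀ j ∈ (t i).index,
              lam (HopfAlgebra.antipode (R := k) ((t i).left j) * z) *
                Coalgebra.counit (R := k) ((t i).right j)
              = lam ((Coalgebra.counit (R := k) ((t i).right j) •
                  HopfAlgebra.antipode (R := k) ((t i).left j)) * z) := fun j _ => by
            rw [smul_mul_assoc, map_smul, smul_eq_mul, mul_comm]
          rw [Finset.sum_congr rfl e2, ← map_sum, ← Finset.sum_mul]
          congr 2
          calc ∑ j ∈ (t i).index, Coalgebra.counit (R := k) ((t i).right j) •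
                HopfAlgebra.antipode (R := k) ((t i).left j)
              = HopfAlgebra.antipode (R := k) (∑ j ∈ (t i).index,
                  Coalgebra.counit (R := k) ((t i).right j) • (t i).left j) := by
                rw [map_sum]
                exact Finset.sum_congr rfl fun j _ => (map_smul _ _ _).symm
            _ = HopfAlgebra.antipode (R := k) (rΛ.right i) := by rw [aux_counit_right (t i)]
      _ = ∑ l ∈ rz.index, lam (HopfAlgebra.antipode (R := k) Λ * rz.left l) • rz.right l :=
          hgenL lam hlam Λ hΛ hpair ν hν rΛ rz
      _ = ∑ l ∈ rz.index, Coalgebra.counit (R := k) (rz.left l) • rz.right l :=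
          Finset.sum_congr rfl fun l _ => by
            rw [lemma_R lam hlam Λ hΛ hpair ν hν (rz.left l)]
      _ = z := aux_counit_left rz
  · -- S(Λ) ⋆ z = z
    calc hstar lam (HopfAlgebra.antipode (R := k) Λ) z
        = ∑ l ∈ rz.index, lam (HopfAlgebra.antipode (R := k) Λ *
            HopfAlgebra.antipode (R := k) (rz.right l)) • rz.left l := by
          rw [hstar_eq, ← rz.eq, map_sum, map_sum]
          refine Finset.sum_congr rfl fun l _ => ?_
          simp only [TensorProduct.map_tmul, LinearMap.id_coe, id_eq,
            LinearMap.comp_apply, LinearMap.mulLeft_apply, TensorProduct.rid_tmul]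
      _ = ∑ l ∈ rz.index, Coalgebra.counit (R := k) (rz.right l) • rz.left l := by
          refine Finset.sum_congr rfl fun l _ => ?_
          rw [lemma_R lam hlam Λ hΛ hpair ν hν (HopfAlgebra.antipode (R := k) (rz.right l)),
            _root_.counit_antipode]
      _ = z := aux_counit_right rz
end

section
/- Let H be a finite-dimensional unimodular ribbon Hopf algebra with right integral λ for H*, left integral Λ with λ(Λ)=λ(S(Λ))=1, and define I(H) as the set of z ∈ L(H) with T(z) − z annihilated by λ(·a) for all central a, and Σ λ(z x_{i(1)}) λ(z x_{i(2)} y_i) = Σ λ(z x_i) λ(z y_i) for all Σ x_i ⊗ y_i ∈ V₂(H). Then 1 ∈ I(H). Conversely, if 1 ∈ I(H) then H is unimodular. -/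
/- STATEMENT 15: H a finite-dimensional ribbon Hopf algebra with right integral λ for
H*, left integral Λ with λ(Λ) = λ(S(Λ)) = 1.  I(H) is the set of z ∈ L(H) with
T(z) − z ∈ N(H) and Σᵢ λ(z x_{i(1)}) λ(z x_{i(2)} y_i) = Σᵢ λ(z xᵢ) λ(z yᵢ) for all
Σᵢ xᵢ ⊗ yᵢ ∈ V₂(H).  Then H is unimodular iff 1 ∈ I(H).  (Here membership of 1 in
I(H) is spelled out, including 1 ∈ L(H).) -/

open TensorProduct Coalgebra HopfAlgebra

/-- `h_ν = (id ⊗ ν)(R)`. -/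
noncomputable def hnu {k H : Type*} [Field k] [Ring H] [HopfAlgebra k H]
    (ν : H →ₐ[k] k) (R : H ⊗[k] H) : H :=
  (TensorProduct.rid k H) ((TensorProduct.map LinearMap.id ν.toLinearMap) R)

/-- `T(z) = (S(z) ↼ ν) h_ν`. -/
noncomputable def Tmap {k H : Type*} [Field k] [Ring H] [HopfAlgebra k H]
    (ν : H →ₐ[k] k) (R : H ⊗[k] H) (z : H) : H :=
  actnu ν (HopfAlgebra.antipode (R := k) z) * hnu ν R

section lifting

universe w

/-- Reindex a `Coalgebra.Repr` so that its index type lives in an arbitrary universe. -/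
noncomputable def liftRepr {k : Type*} {H : Type*} [CommSemiring k] [AddCommMonoid H]
    [Module k H] [CoalgebraStruct k H] {ι : Type*} (x : H) (r : Coalgebra.Repr k x ι) :
    Coalgebra.Repr k x (ULift.{w} ℕ) where
  index := (Finset.range r.index.card).map ⟨ULift.up, ULift.up_injective⟩
  left := fun i => if h : i.down < r.index.card then
    r.left (r.index.equivFin.symm ⟨i.down, h⟩) else 0
  right := fun i => if h : i.down < r.index.card then
    r.right (r.index.equivFin.symm ⟨i.down, h⟩) else 0
  eq := by
    classical
    rw [Finset.sum_map, ← r.eq]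
    simp only [Function.Embedding.coeFn_mk, ULift.down_up]
    calc ∑ a ∈ Finset.range r.index.card,
          ((if h : a < r.index.card then r.left (r.index.equivFin.symm ⟨a, h⟩) else 0) ⊗ₜ[k]
           (if h : a < r.index.card then r.right (r.index.equivFin.symm ⟨a, h⟩) else 0))
        = ∑ a ∈ Finset.range r.index.card, (if h : a < r.index.card then
            r.left (r.index.equivFin.symm ⟨a, h⟩) ⊗ₜ[k] r.right (r.index.equivFin.symm ⟨a, h⟩)
            else 0) := by
          refine Finset.sum_congr rfl fun a _ => ?_
          by_cases h : a < r.index.card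
          · rw [dif_pos h, dif_pos h, dif_pos h]
          · rw [dif_neg h, dif_neg h, dif_neg h, TensorProduct.zero_tmul]
      _ = ∑ j : Fin r.index.card, (if h : (j : ℕ) < r.index.card then
            r.left (r.index.equivFin.symm ⟨(j : ℕ), h⟩) ⊗ₜ[k]
              r.right (r.index.equivFin.symm ⟨(j : ℕ), h⟩)
            else 0) := (Fin.sum_univ_eq_sum_range _ _).symm
      _ = ∑ j : Fin r.index.card,
            r.left (r.index.equivFin.symm j) ⊗ₜ[k] r.right (r.index.equivFin.symm j) := by
          refine Finset.sum_congr rfl fun j _ => ?_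
          rw [dif_pos j.isLt]
      _ = ∑ i ∈ r.index, r.left i ⊗ₜ[k] r.right i := by
          rw [← Finset.sum_coe_sort r.index (fun i => r.left i ⊗ₜ[k] r.right i)]
          exact Equiv.sum_comp r.index.equivFin.symm
            (fun i : {y // y ∈ r.index} => r.left i ⊗ₜ[k] r.right i)

/-- `∑ λ(x₍₁₎) x₍₂₎` does not depend on the chosen representation. -/
lemma sum_lam_eq {k : Type*} {H : Type*} [CommSemiring k] [AddCommMonoid H]
    [Module k H] [Coalgebra k H] (lam : H →ₗ[k] k) {ι : Type*} (x : H) (r : Coalgebra.Repr k x ι) :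
    ∑ i ∈ r.index, lam (r.left i) • r.right i
      = (TensorProduct.lid k H)
          (TensorProduct.map lam LinearMap.id (Coalgebra.comul (R := k) x)) := by
  rw [← r.eq]; simp [map_sum]

end lifting

section aux
variable {k H : Type*} [Field k] [Ring H] [HopfAlgebra k H]

variable {k H : Type*} [Field k] [Ring H] [HopfAlgebra k H]

lemma actnu_eq_id (ν : H →ₐ[k] k) (hν : ∀ x : H, ν x = Coalgebra.counit (R := k) x) (w : H) :
    actnu ν w = w := by
  have h : ν.toLinearMap = (Coalgebra.counit : H →ₗ[k] k) := LinearMap.ext hν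
  have h2 : TensorProduct.map (Coalgebra.counit (R := k) (A := H)) LinearMap.id
      (Coalgebra.comul (R := k) w) = (1 : k) ⊗ₜ[k] w := Coalgebra.rTensor_counit_comul w
  simp [actnu, h, h2]

lemma actnu_apply (ν : H →ₐ[k] k) {ι : Type*} (x : H) (r : Coalgebra.Repr k x ι) :
    actnu ν x = ∑ i ∈ r.index, ν (r.left i) • r.right i := by
  simp [actnu, ← r.eq, map_sum]

lemma antipode_one' : HopfAlgebra.antipode (R := k) (1 : H) = 1 := by
  have h := HopfAlgebra.mul_antipode_rTensor_comul_apply (R := k) (A := H) 1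
  simpa [Algebra.TensorProduct.one_def] using h

lemma hnu_eq_one (ν : H →ₐ[k] k) (hν : ∀ x : H, ν x = Coalgebra.counit (R := k) x)
    (R Rinv : H ⊗[k] H) (hR2 : Rinv * R = 1)
    (hR13_12 : LinearMap.lTensor H (Coalgebra.comul (R := k) (A := H)) R =
      LinearMap.lTensor H (Algebra.TensorProduct.includeRight : H →ₐ[k] H ⊗[k] H).toLinearMap R *
      LinearMap.lTensor H (Algebra.TensorProduct.includeLeft : H →ₐ[k] H ⊗[k] H).toLinearMap R) :
    hnu ν R = 1 := by
  classical
  set g : H ⊗[k] H →ₐ[k] H :=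
    (Algebra.TensorProduct.lid k H).toAlgHom.comp
      (Algebra.TensorProduct.map (Bialgebra.counitAlgHom k H) (AlgHom.id k H)) with hg_def
  have hg : ∀ (x y : H), g (x ⊗ₜ[k] y) = Coalgebra.counit (R := k) x • y := by
    intro x y
    simp [hg_def]
  have hglin : ∀ t : H ⊗[k] H, g t = (TensorProduct.lid k H)
      (TensorProduct.map (Coalgebra.counit (R := k) (A := H)) LinearMap.id t) := by
    intro t
    induction t using TensorProduct.induction_on with
    | zero => simp
    | tmul x y => simp [hg]
    | add a b ha hb => simp [map_add, ha, hb]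
  set G : H ⊗[k] (H ⊗[k] H) →ₐ[k] H ⊗[k] H :=
    Algebra.TensorProduct.map (AlgHom.id k H) g with hG_def
  set V : H ⊗[k] H →ₗ[k] H :=
    (TensorProduct.rid k H).toLinearMap ∘ₗ
      TensorProduct.map LinearMap.id (Coalgebra.counit (R := k) (A := H)) with hV_def
  have hV : ∀ (x y : H), V (x ⊗ₜ[k] y) = Coalgebra.counit (R := k) y • x := by
    intro x y; simp [hV_def]
  -- claim 1
  have c1 : ∀ t : H ⊗[k] H, G (LinearMap.lTensor H (Coalgebra.comul (R := k) (A := H)) t) = t := by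
    intro t
    induction t using TensorProduct.induction_on with
    | zero => simp
    | tmul x y =>
        have h2 : g (Coalgebra.comul (R := k) y) = y := by
          have h3 : TensorProduct.map (Coalgebra.counit (R := k) (A := H)) LinearMap.id
              (Coalgebra.comul (R := k) y) = (1 : k) ⊗ₜ[k] y := Coalgebra.rTensor_counit_comul y
          rw [hglin, h3]; simp
        simp [LinearMap.lTensor_tmul, hG_def, Algebra.TensorProduct.map_tmul, h2]
    | add a b ha hb => simp [map_add, ha, hb]
  have c2 : ∀ t : H ⊗[k] H, G (LinearMap.lTensor H
      (Algebra.TensorProduct.includeRight : H →ₐ[k] H ⊗[k] H).toLinearMap t) = t := by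
    intro t
    induction t using TensorProduct.induction_on with
    | zero => simp
    | tmul x y => simp [hG_def, hg]
    | add a b ha hb => rw [map_add, map_add, ha, hb]
  have c3 : ∀ t : H ⊗[k] H, G (LinearMap.lTensor H
      (Algebra.TensorProduct.includeLeft : H →ₐ[k] H ⊗[k] H).toLinearMap t) = V t ⊗ₜ[k] 1 := by
    intro t
    induction t using TensorProduct.induction_on with
    | zero => simp
    | tmul x y => simp [hG_def, hg, hV, TensorProduct.smul_tmul']
    | add a b ha hb => rw [map_add, map_add, ha, hb, map_add, TensorProduct.add_tmul]
  have key : R = R * (V R ⊗ₜ[k] 1) := by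
    have := congrArg G hR13_12
    rw [map_mul, c1, c2, c3] at this
    exact this
  have h1 : (V R ⊗ₜ[k] (1 : H) : H ⊗[k] H) = 1 := by
    calc (V R ⊗ₜ[k] (1 : H) : H ⊗[k] H) = 1 * (V R ⊗ₜ[k] 1) := (one_mul _).symm
      _ = (Rinv * R) * (V R ⊗ₜ[k] 1) := by rw [hR2]
      _ = Rinv * (R * (V R ⊗ₜ[k] 1)) := mul_assoc _ _ _
      _ = Rinv * R := by rw [← key]
      _ = 1 := hR2
  have hVR : V R = 1 := by
    have := congrArg V h1
    rwa [hV, Algebra.TensorProduct.one_def, hV, Bialgebra.counit_one, one_smul, one_smul] at this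
  have hνlin : ν.toLinearMap = (Coalgebra.counit : H →ₗ[k] k) := LinearMap.ext hν
  rw [hnu, hνlin]
  exact hVR
end aux

theorem stmt15 {k H : Type*} [Field k] [Ring H] [HopfAlgebra k H] [FiniteDimensional k H]
    -- quasitriangular structure
    (R Rinv : H ⊗[k] H) (hR1 : R * Rinv = 1) (hR2 : Rinv * R = 1)
    (hRcomm : ∀ x : H,
      R * Coalgebra.comul (R := k) x = (TensorProduct.comm k H H) (Coalgebra.comul (R := k) x) * R)
    (hR13_12 : LinearMap.lTensor H (Coalgebra.comul (R := k) (A := H)) R =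
      LinearMap.lTensor H (Algebra.TensorProduct.includeRight : H →ₐ[k] H ⊗[k] H).toLinearMap R *
      LinearMap.lTensor H (Algebra.TensorProduct.includeLeft : H →ₐ[k] H ⊗[k] H).toLinearMap R)
    (hR13_23 : LinearMap.rTensor H (Coalgebra.comul (R := k) (A := H)) R =
      LinearMap.rTensor H (Algebra.TensorProduct.includeLeft : H →ₐ[k] H ⊗[k] H).toLinearMap R *
      LinearMap.rTensor H (Algebra.TensorProduct.includeRight : H →ₐ[k] H ⊗[k] H).toLinearMap R)
    -- ribbon structure
    (θ θinv : H) (hθ1 : θ * θinv = 1) (hθ2 : θinv * θ = 1)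
    (hθc : ∀ x : H, θ * x = x * θ)
    (hθS : HopfAlgebra.antipode (R := k) θ = θ)
    (hθΔ : Coalgebra.comul (R := k) θ = (θ ⊗ₜ[k] θ) * ((TensorProduct.comm k H H) R * R))
    -- integrals
    (lam : H →ₗ[k] k)
    (hlam : ∀ (x : H) (ιr : Type _) (r : Coalgebra.Repr k x ιr),
      ∑ i ∈ r.index, lam (r.left i) • r.right i = lam x • (1 : H))
    (Λ : H) (hΛ0 : Λ ≠ 0)
    (hΛ : ∀ x : H, x * Λ = Coalgebra.counit (R := k) x • Λ)
    (hpair : lam Λ = 1) (hpair' : lam (HopfAlgebra.antipode (R := k) Λ) = 1)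
    (ν : H →ₐ[k] k) (hν : ∀ x : H, Λ * x = ν x • Λ) :
    -- H is unimodular  ↔  1 ∈ I(H)
    (∀ x : H, ν x = Coalgebra.counit (R := k) x) ↔
      ( -- 1 ∈ L(H)
        (∀ w : H, actnu ν w * 1 = 1 * w) ∧
        -- T(1) − 1 ∈ N(H)
        (∀ a : H, (∀ w : H, a * w = w * a) → lam ((Tmap ν R 1 - 1) * a) = 0) ∧
        -- the handle-slide condition, for every Σᵢ xᵢ ⊗ yᵢ ∈ V₂(H)
        (∀ (ι : Type) (s : Finset ι) (xv yv : ι → H),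
          -- membership of Σᵢ xᵢ ⊗ yᵢ in V₂(H): invariance under the diagonal
          -- adjoint action (x ⊗ y) ◁ h = S(h₍₁₎)xh₍₂₎ ⊗ S(h₍₃₎)yh₍₄₎
          (∀ (h : H) (ιr : Type _) (r : Coalgebra.Repr k h ιr)
              (κl : ιr → Type _) (rl : ∀ i, Coalgebra.Repr k (r.left i) (κl i))
              (κr : ιr → Type _) (rr : ∀ i, Coalgebra.Repr k (r.right i) (κr i)),
            ∑ i ∈ r.index, ∑ a ∈ (rl i).index, ∑ b ∈ (rr i).index, ∑ j ∈ s,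
              (HopfAlgebra.antipode (R := k) ((rl i).left a) * xv j * (rl i).right a)
                ⊗ₜ[k] (HopfAlgebra.antipode (R := k) ((rr i).left b) * yv j * (rr i).right b)
              = Coalgebra.counit (R := k) h • ∑ j ∈ s, xv j ⊗ₜ[k] yv j) →
          ∀ (κx : ι → Type _) (rx : ∀ j, Coalgebra.Repr k (xv j) (κx j)),
            ∑ j ∈ s, ∑ a ∈ (rx j).index, lam ((rx j).left a) * lam ((rx j).right a * yv j)
              = ∑ j ∈ s, lam (xv j) * lam (yv j)) ) := by
  
  constructor
  · intro huni
    refine ⟨fun w => by rw [actnu_eq_id ν huni w, one_mul, mul_one], ?_, ?_⟩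
    · intro a _
      have hT : Tmap ν R 1 = 1 := by
        rw [Tmap, antipode_one', actnu_eq_id ν huni 1,
          hnu_eq_one ν huni R Rinv hR2 hR13_12, one_mul]
      rw [hT, sub_self, zero_mul, map_zero]
    · intro ι s xv yv _ κx rx
      refine Finset.sum_congr rfl fun j _ => ?_
      have hx : (TensorProduct.lid k H)
          (TensorProduct.map lam LinearMap.id (Coalgebra.comul (R := k) (xv j)))
          = lam (xv j) • (1 : H) := by
        rw [← sum_lam_eq lam (xv j) (liftRepr (xv j) (Coalgebra.Repr.arbitrary k (xv j)))]
        exact hlam (xv j) _ (liftRepr (xv j) (Coalgebra.Repr.arbitrary k (xv j)))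
      have h := congrArg (fun w => lam (w * yv j)) ((sum_lam_eq lam (xv j) (rx j)).trans hx)
      simpa [Finset.sum_mul, smul_mul_assoc, map_sum, smul_eq_mul] using h
  · rintro ⟨h1, -, -⟩ x
    have hid : ∀ w : H, actnu ν w = w := fun w => by
      have := h1 w; rwa [mul_one, one_mul] at this
    set r := Coalgebra.Repr.arbitrary k x with hr
    have e1 : actnu ν x = ∑ i ∈ r.index, ν (r.left i) • r.right i := actnu_apply ν x r
    have e2 : ∑ i ∈ r.index, ν (r.left i) * Coalgebra.counit (R := k) (r.right i)
        = Coalgebra.counit (R := k) x := by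
      have := congrArg (Coalgebra.counit (R := k) (A := H)) ((e1.symm).trans (hid x))
      simpa [map_sum, smul_eq_mul] using this
    have e3 : ∑ i ∈ r.index, ν (r.left i) * Coalgebra.counit (R := k) (r.right i) = ν x := by
      have h := Coalgebra.sum_tmul_counit_eq (R := k) r
      calc ∑ i ∈ r.index, ν (r.left i) * Coalgebra.counit (R := k) (r.right i)
          = ν ((TensorProduct.rid k H)
              (∑ i ∈ r.index, r.left i ⊗ₜ[k] Coalgebra.counit (R := k) (r.right i))) := by
            simp only [map_sum, TensorProduct.rid_tmul, map_smul, smul_eq_mul]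
            exact Finset.sum_congr rfl fun i _ => mul_comm _ _
        _ = ν ((TensorProduct.rid k H) (x ⊗ₜ[k] (1 : k))) := by rw [h]
        _ = ν x := by simp
    rw [← e3, e2]
end
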